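/- arXiv:1008.1029 — 4 statements merged into one kernel-verified Lean document; each statement's English description precedes it below -/
import Mathlib

section
/- Let k ≥ 1 and let A be the square matrix over F₂ whose rows and columns are indexed by the nonzero vectors of F₂^k, with entries A_{x,y} = x·y = ∑_{i=1}^k x_i y_i (mod 2). Then: (i) rank(A) = k; (ii) every nonzero element of the row space of A (which equals the column space, as A is symmetric) has Hamming weight exactly 2^{k−1}, so drow(A) = dcol(A) = 2^{k−1}; (iii) the number of nonzero entries of A is |A| = (2^k − 1)·2^{k−1}; consequently 2·drow(A)·dcol(A)·(1 − 2^{−k}) = |A|, i.e. this matrix achieves the bound 2·drow·dcol·(1 − 2^{−k}) ≤ |A| with equality. -/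
set_option linter.unusedSectionVars false

open Finset Matrix

abbrev F2 : Type := ZMod 2

abbrev PauliSpace (Q : Type) := Q → F2 × F2

section Pauli

variable {Q : Type} [Fintype Q] [DecidableEq Q]

/-- Support of a Pauli vector. -/
def psupp (v : PauliSpace Q) : Finset Q := Finset.univ.filter (fun q => v q ≠ (0, 0))

/-- Weight of a Pauli vector. -/
def pwt (v : PauliSpace Q) : ℕ := (psupp v).card

/-- The symplectic form. -/
def omegaF (u v : PauliSpace Q) : F2 :=
  ∑ q, ((u q).1 * (v q).2 + (u q).2 * (v q).1)

lemma omegaF_add_left (u v w : PauliSpace Q) :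
    omegaF (u + v) w = omegaF u w + omegaF v w := by
  simp only [omegaF, Pi.add_apply, Prod.fst_add, Prod.snd_add, ← Finset.sum_add_distrib]
  exact Finset.sum_congr rfl (fun q _ => by ring)

lemma omegaF_smul_left (c : F2) (u w : PauliSpace Q) :
    omegaF (c • u) w = c * omegaF u w := by
  simp only [omegaF, Pi.smul_apply, Prod.smul_fst, Prod.smul_snd, smul_eq_mul,
    Finset.mul_sum]
  exact Finset.sum_congr rfl (fun q _ => by ring)

/-- Centralizer of a subspace w.r.t. the symplectic form. -/
def pcent (G : Submodule F2 (PauliSpace Q)) : Submodule F2 (PauliSpace Q) where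
  carrier := {v | ∀ g ∈ G, omegaF v g = 0}
  zero_mem' := by
    intro g _
    simp [omegaF]
  add_mem' := by
    intro a b ha hb g hg
    rw [omegaF_add_left, ha g hg, hb g hg, add_zero]
  smul_mem' := by
    intro c a ha g hg
    rw [omegaF_smul_left, ha g hg, mul_zero]

/-- Stabilizer group of a gauge group. -/
def pstab (G : Submodule F2 (PauliSpace Q)) : Submodule F2 (PauliSpace Q) := G ⊓ pcent G

/-- Single-qubit Pauli X vector. -/
def Xop (c : Q) : PauliSpace Q := fun q => if q = c then (1, 0) else (0, 0)

/-- Single-qubit Pauli Z vector. -/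
def Zop (c : Q) : PauliSpace Q := fun q => if q = c then (0, 1) else (0, 0)

/-- The set of weights of dressed logical operators; its infimum is the distance. -/
def distSet (G : Submodule F2 (PauliSpace Q)) : Set ℕ :=
  {w | ∃ v, v ∈ pcent (pstab G) ∧ v ∉ G ∧ pwt v = w}

/-- Pauli vectors supported in `M`. -/
def PMod (M : Finset Q) : Submodule F2 (PauliSpace Q) where
  carrier := {v | ∀ q, q ∉ M → v q = 0}
  zero_mem' := by intro q _; rfl
  add_mem' := by
    intro a b ha hb q hq
    simp [Pi.add_apply, ha q hq, hb q hq]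
  smul_mem' := by
    intro c a ha q hq
    simp [Pi.smul_apply, ha q hq]

/-- Projection onto the qubits in `M`. -/
def projL (M : Finset Q) : PauliSpace Q →ₗ[F2] PauliSpace Q where
  toFun v := fun q => if q ∈ M then v q else 0
  map_add' a b := by funext q; by_cases h : q ∈ M <;> simp [h]
  map_smul' c a := by funext q; by_cases h : q ∈ M <;> simp [h]

/-- Number of independent dressed logical operators supported in `M`. -/
noncomputable def lM (G : Submodule F2 (PauliSpace Q)) (M : Finset Q) : ℕ :=
  Module.finrank F2 ↥(pcent ((pstab G).map (projL M)) ⊓ PMod M)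
    - Module.finrank F2 ↥(G ⊓ PMod M)

/-- Number of independent bare logical operators supported in `M`. -/
noncomputable def lbareM (G : Submodule F2 (PauliSpace Q)) (M : Finset Q) : ℕ :=
  Module.finrank F2 ↥(pcent (G.map (projL M)) ⊓ PMod M)
    - Module.finrank F2 ↥(pstab G ⊓ PMod M)

end Pauli

section Classical

variable {ι : Type} [Fintype ι] [DecidableEq ι]

/-- Hamming weight of a classical vector. -/
def hwt (v : ι → F2) : ℕ := (Finset.univ.filter (fun i => v i ≠ 0)).card

/-- Row space of a matrix. -/
def Crow (A : Matrix ι ι F2) : Submodule F2 (ι → F2) := Submodule.span F2 (Set.range A)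

/-- Column space of a matrix. -/
def Ccol (A : Matrix ι ι F2) : Submodule F2 (ι → F2) := Submodule.span F2 (Set.range Aᵀ)

/-- Minimum distance of the row space. -/
noncomputable def drow (A : Matrix ι ι F2) : ℕ := sInf {w | ∃ v ∈ Crow A, v ≠ 0 ∧ hwt v = w}

/-- Minimum distance of the column space. -/
noncomputable def dcol (A : Matrix ι ι F2) : ℕ := sInf {w | ∃ v ∈ Ccol A, v ≠ 0 ∧ hwt v = w}

/-- Number of nonzero entries of a matrix. -/
def nnz (A : Matrix ι ι F2) : ℕ :=
  (Finset.univ.filter (fun p : ι × ι => A p.1 p.2 ≠ 0)).card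

end Classical

section BaconShor

variable {m : ℕ}

/-- Qubit set of the generalized Bacon-Shor code: cells with `A i j = 1`. -/
abbrev QA (A : Matrix (Fin m) (Fin m) F2) : Type := {c : Fin m × Fin m // A c.1 c.2 = 1}

/-- Generators of the gauge group. -/
def gaugeSet (A : Matrix (Fin m) (Fin m) F2) : Set (PauliSpace (QA A)) :=
  {v | ∃ c c' : QA A, c ≠ c' ∧
    ((c.1.1 = c'.1.1 ∧ v = Xop c + Xop c') ∨ (c.1.2 = c'.1.2 ∧ v = Zop c + Zop c'))}

/-- Gauge group of the generalized Bacon-Shor code. -/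
def gaugeBS (A : Matrix (Fin m) (Fin m) F2) : Submodule F2 (PauliSpace (QA A)) :=
  Submodule.span F2 (gaugeSet A)

/-- The row operator `R i`. -/
def Rop (A : Matrix (Fin m) (Fin m) F2) (i : Fin m) : PauliSpace (QA A) :=
  ∑ c ∈ Finset.univ.filter (fun c : QA A => c.1.1 = i), Zop c

/-- The column operator `C j`. -/
def Cop (A : Matrix (Fin m) (Fin m) F2) (j : Fin m) : PauliSpace (QA A) :=
  ∑ c ∈ Finset.univ.filter (fun c : QA A => c.1.2 = j), Xop c

/-- X-type operator parameterized by a binary vector. -/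
def PXop (A : Matrix (Fin m) (Fin m) F2) (x : Fin m → F2) : PauliSpace (QA A) :=
  ∑ j, x j • Cop A j

/-- Z-type operator parameterized by a binary vector. -/
def PZop (A : Matrix (Fin m) (Fin m) F2) (z : Fin m → F2) : PauliSpace (QA A) :=
  ∑ i, z i • Rop A i

end BaconShor

/-- Binary entropy. -/
noncomputable def H2 (p : ℝ) : ℝ := -p * Real.logb 2 p - (1 - p) * Real.logb 2 (1 - p)
section HadamardAux

lemma zmod2_eq_one_of_ne_zero : ∀ a : ZMod 2, a ≠ 0 → a = 1 := by decide
lemma zmod2_ne_zero_iff : ∀ a : ZMod 2, a ≠ 0 ↔ a = 1 := by decide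
lemma zmod2_add_self : ∀ a : ZMod 2, a + a = 0 := by decide

/-- The linear map sending `x` to the vector `y ↦ ⟨x,y⟩` indexed by nonzero `y`. -/
def Lmap (k : ℕ) : (Fin k → F2) →ₗ[F2] ({x : Fin k → F2 // x ≠ 0} → F2) where
  toFun x := fun y => ∑ i, x i * y.1 i
  map_add' a b := by
    funext y
    simp [add_mul, Finset.sum_add_distrib]
  map_smul' c a := by
    funext y
    simp [Finset.mul_sum, mul_assoc]

variable {k : ℕ}

lemma single_ne_zero' (i : Fin k) : (Pi.single i 1 : Fin k → F2) ≠ 0 := by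
  intro h
  have := congrFun h i
  simp at this

lemma sum_mul_single (x : Fin k → F2) (i₀ : Fin k) :
    ∑ i, x i * (Pi.single i₀ 1 : Fin k → F2) i = x i₀ := by
  simp [Pi.single_apply, mul_ite, Finset.sum_ite_eq']

lemma fiber_card (hk : 1 ≤ k) (x : Fin k → F2) (hx : x ≠ 0) :
    (Finset.univ.filter fun y : Fin k → F2 => (∑ i, x i * y i) = 1).card = 2 ^ (k - 1) := by
  obtain ⟨i₀, hi₀⟩ := Function.ne_iff.mp hx
  have hx1 : x i₀ = 1 := zmod2_eq_one_of_ne_zero _ (by simpa using hi₀)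
  set e : Fin k → F2 := Pi.single i₀ 1 with he
  have hswap : ∀ y : Fin k → F2, (∑ i, x i * (y + e) i) = (∑ i, x i * y i) + 1 := by
    intro y
    have h1 : ∀ i, x i * (y + e) i = x i * y i + x i * e i := fun i => by
      simp [Pi.add_apply, mul_add]
    rw [Finset.sum_congr rfl (fun i _ => h1 i), Finset.sum_add_distrib, he,
      sum_mul_single, hx1]
  have hinv : ∀ y : Fin k → F2, y + e + e = y := by
    intro y; funext i; simp [Pi.add_apply, add_assoc, zmod2_add_self]
  have hcard : (Finset.univ.filter fun y : Fin k → F2 => ¬ ((∑ i, x i * y i) = 1)).card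
      = (Finset.univ.filter fun y : Fin k → F2 => (∑ i, x i * y i) = 1).card := by
    apply Finset.card_bij' (fun y _ => y + e) (fun y _ => y + e)
    · intro a ha
      simp only [Finset.mem_filter, Finset.mem_univ, true_and] at ha ⊢
      have h0 : (∑ i, x i * a i) = 0 := by
        by_contra h
        exact ha (zmod2_eq_one_of_ne_zero _ h)
      rw [hswap, h0, zero_add]
    · intro a ha
      simp only [Finset.mem_filter, Finset.mem_univ, true_and] at ha ⊢
      rw [hswap, ha]
      decide
    · intro a _; exact hinv a
    · intro a _; exact hinv a
  have htot := Finset.card_filter_add_card_filter_not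
      (s := (Finset.univ : Finset (Fin k → F2)))
      (p := fun y => (∑ i, x i * y i) = 1)
  rw [hcard] at htot
  generalize hS : (Finset.univ.filter fun y : Fin k → F2 => (∑ i, x i * y i) = 1).card = S at htot ⊢
  have hcu : (Finset.univ : Finset (Fin k → F2)).card = 2 ^ k := by
    simp [Finset.card_univ]
  have h2 : 2 ^ k = 2 * 2 ^ (k - 1) := by
    conv_lhs => rw [← Nat.sub_add_cancel hk]
    rw [pow_succ]; ring
  rw [hcu, h2] at htot
  have h3 : 2 * S = 2 * 2 ^ (k - 1) := by rw [two_mul, htot]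
  exact Nat.eq_of_mul_eq_mul_left (by norm_num) h3

lemma hwt_row (hk : 1 ≤ k) (x : Fin k → F2) (hx : x ≠ 0) :
    hwt (fun y : {x : Fin k → F2 // x ≠ 0} => ∑ i, x i * y.1 i) = 2 ^ (k - 1) := by
  have key : Fintype.card {y : {x : Fin k → F2 // x ≠ 0} // (∑ i, x i * y.1 i) = 1}
      = Fintype.card {y : Fin k → F2 // (∑ i, x i * y i) = 1} := by
    apply Fintype.card_congr
    refine ⟨fun z => ⟨z.1.1, z.2⟩, fun z => ⟨⟨z.1, fun h0 => ?_⟩, z.2⟩,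
      fun z => rfl, fun z => rfl⟩
    have h := z.2
    simp [h0] at h
  have h1 : (Finset.univ.filter
        fun y : {x : Fin k → F2 // x ≠ 0} => (∑ i, x i * y.1 i) ≠ 0)
      = Finset.univ.filter
        fun y : {x : Fin k → F2 // x ≠ 0} => (∑ i, x i * y.1 i) = 1 :=
    Finset.filter_congr (fun y _ => zmod2_ne_zero_iff _)
  show (Finset.univ.filter
      fun y : {x : Fin k → F2 // x ≠ 0} => (∑ i, x i * y.1 i) ≠ 0).card = 2 ^ (k - 1)
  rw [h1, ← Fintype.card_subtype, key, Fintype.card_subtype, fiber_card hk x hx]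

lemma crow_eq (A : Matrix {x : Fin k → F2 // x ≠ 0} {x : Fin k → F2 // x ≠ 0} F2)
    (hA : ∀ x y, A x y = ∑ i, x.1 i * y.1 i) :
    Crow A = LinearMap.range (Lmap k) := by
  apply le_antisymm
  · rw [Crow, Submodule.span_le]
    rintro _ ⟨x, rfl⟩
    exact ⟨x.1, by funext y; rw [hA]; rfl⟩
  · rintro v ⟨x, rfl⟩
    by_cases hx : x = 0
    · subst hx
      rw [map_zero]
      exact Submodule.zero_mem _
    · exact Submodule.subset_span ⟨⟨x, hx⟩, by funext y; rw [hA]; rfl⟩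

lemma Lmap_inj : Function.Injective (Lmap k) := by
  rw [← LinearMap.ker_eq_bot, eq_bot_iff]
  intro x hx
  rw [LinearMap.mem_ker] at hx
  rw [Submodule.mem_bot]
  funext i
  have h := congrFun hx ⟨Pi.single i 1, single_ne_zero' i⟩
  have h2 : (∑ j, x j * (Pi.single i 1 : Fin k → F2) j) = 0 := h
  rw [sum_mul_single] at h2
  simpa using h2

end HadamardAux

/-- The binary Hadamard-type matrix `A_{x,y} = x·y`, indexed by the nonzero vectors of
`F₂^k`, has rank `k`, all nonzero row-space and column-space vectors of Hamming weight
exactly `2^{k−1}` (so `drow = dcol = 2^{k−1}`), exactly `(2^k − 1)·2^{k−1}` nonzero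
entries, and achieves the bound `2·drow·dcol·(1 − 2^{−k}) ≤ |A|` with equality. -/
theorem hadamard_matrix_achieves_bound (k : ℕ) (hk : 1 ≤ k)
    (A : Matrix {x : Fin k → F2 // x ≠ 0} {x : Fin k → F2 // x ≠ 0} F2)
    (hA : ∀ x y, A x y = ∑ i, x.1 i * y.1 i) :
    A.rank = k ∧
    (∀ v ∈ Crow A, v ≠ 0 → hwt v = 2 ^ (k - 1)) ∧
    (∀ v ∈ Ccol A, v ≠ 0 → hwt v = 2 ^ (k - 1)) ∧
    drow A = 2 ^ (k - 1) ∧ dcol A = 2 ^ (k - 1) ∧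
    nnz A = (2 ^ k - 1) * 2 ^ (k - 1) ∧
    2 * drow A * dcol A * (2 ^ k - 1) = nnz A * 2 ^ k := by
  have hAT : Aᵀ = A := by
    ext x y
    rw [Matrix.transpose_apply, hA, hA]
    exact Finset.sum_congr rfl (fun i _ => mul_comm _ _)
  have hrowL : Crow A = LinearMap.range (Lmap k) := crow_eq A hA
  have hcc : Ccol A = Crow A := by rw [Ccol, Crow, hAT]
  -- rank
  have hrange : LinearMap.range A.mulVecLin = Crow A := by
    rw [Matrix.range_mulVecLin, Matrix.col, hAT]; rfl
  have hrank : A.rank = k := by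
    show Module.finrank F2 ↥(LinearMap.range A.mulVecLin) = k
    rw [hrange, hrowL, LinearMap.finrank_range_of_inj Lmap_inj, Module.finrank_pi,
      Fintype.card_fin]
  -- weight of nonzero row-space vectors
  have hrow_wt : ∀ v ∈ Crow A, v ≠ 0 → hwt v = 2 ^ (k - 1) := by
    intro v hv hv0
    rw [hrowL] at hv
    obtain ⟨x, rfl⟩ := hv
    have hx : x ≠ 0 := by
      rintro rfl
      exact hv0 (map_zero _)
    exact hwt_row hk x hx
  have hcol_wt : ∀ v ∈ Ccol A, v ≠ 0 → hwt v = 2 ^ (k - 1) := by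
    rw [hcc]; exact hrow_wt
  -- the witness row
  set i₀ : Fin k := ⟨0, hk⟩ with hi₀
  set x₀ : {x : Fin k → F2 // x ≠ 0} := ⟨Pi.single i₀ 1, single_ne_zero' i₀⟩ with hx₀
  have hwitmem : A x₀ ∈ Crow A := Submodule.subset_span ⟨x₀, rfl⟩
  have hAxx : A x₀ x₀ = 1 := by
    rw [hA, sum_mul_single]
    simp [x₀, Pi.single_apply]
  have hwitne : A x₀ ≠ 0 := by
    intro h
    have := congrFun h x₀
    rw [hAxx] at this
    exact one_ne_zero this
  -- the distance sets
  have hsetrow : {w | ∃ v ∈ Crow A, v ≠ 0 ∧ hwt v = w} = {2 ^ (k - 1)} := by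
    ext w
    simp only [Set.mem_setOf_eq, Set.mem_singleton_iff]
    constructor
    · rintro ⟨v, hv, hv0, rfl⟩
      exact hrow_wt v hv hv0
    · rintro rfl
      exact ⟨A x₀, hwitmem, hwitne, hrow_wt _ hwitmem hwitne⟩
  have hdrow : drow A = 2 ^ (k - 1) := by
    rw [drow, hsetrow, csInf_singleton]
  have hdcol : dcol A = 2 ^ (k - 1) := by
    rw [dcol]
    have : {w | ∃ v ∈ Ccol A, v ≠ 0 ∧ hwt v = w} = {2 ^ (k - 1)} := by
      rw [hcc]; exact hsetrow
    rw [this, csInf_singleton]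
  -- nnz
  have hnnz : nnz A = (2 ^ k - 1) * 2 ^ (k - 1) := by
    have h1 : nnz A
        = ∑ x : {x : Fin k → F2 // x ≠ 0},
            (Finset.univ.filter fun y : {x : Fin k → F2 // x ≠ 0} => A x y ≠ 0).card := by
      rw [nnz, ← Fintype.card_subtype,
        @Fintype.card_congr _ _ _ (@Sigma.instFintype _ _ (fun a => inferInstance) _)
          (Equiv.subtypeProdEquivSigmaSubtype (fun a b => A a b ≠ 0)),
        @Fintype.card_sigma _ _ _ (fun a => inferInstance)]
      exact Finset.sum_congr rfl fun x _ => Fintype.card_subtype _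
    have h2 : ∀ x : {x : Fin k → F2 // x ≠ 0},
        (Finset.univ.filter fun y : {x : Fin k → F2 // x ≠ 0} => A x y ≠ 0).card
          = 2 ^ (k - 1) := by
      intro x
      have hAx : A x = fun y => ∑ i, x.1 i * y.1 i := funext (fun y => hA x y)
      have : (Finset.univ.filter fun y : {x : Fin k → F2 // x ≠ 0} => A x y ≠ 0).card
          = hwt (A x) := rfl
      rw [this, hAx]
      exact hwt_row hk x.1 x.2
    rw [h1, Finset.sum_congr rfl (fun x _ => h2 x), Finset.sum_const, Finset.card_univ,
      smul_eq_mul]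
    congr 1
    simp [Set.card_ne_eq]
  refine ⟨hrank, hrow_wt, hcol_wt, hdrow, hdcol, hnnz, ?_⟩
  have h2k : 2 * 2 ^ (k - 1) = 2 ^ k := by
    conv_rhs => rw [← Nat.sub_add_cancel hk]
    rw [pow_succ]; ring
  rw [hdrow, hdcol, hnnz, ← h2k]
  generalize 2 * 2 ^ (k - 1) - 1 = m
  ring
end

section
/- Fix m ≥ 1, 0 ≤ k ≤ m and a nonzero vector x ∈ F₂^m. Then (2^k − 1)·|{A : m×m matrix over F₂ with rank(A) = k}| = (2^m − 1)·|{A : m×m matrix over F₂ with rank(A) = k and x ∈ Ccol(A)}|. -/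
set_option linter.unusedSectionVars false

open Finset Matrix

lemma exists_linEquiv {K V : Type*} [Field K] [AddCommGroup V] [Module K V] [Finite V]
    (x y : V) (hx : x ≠ 0) (hy : y ≠ 0) :
    ∃ e : V ≃ₗ[K] V, e x = y := by
  classical
  have hxi := LinearIndepOn.singleton (R := K) (v := id) hx
  have hyi := LinearIndepOn.singleton (R := K) (v := id) hy
  let bx := Module.Basis.extend hxi
  let by' := Module.Basis.extend hyi
  have := Fintype.ofFinite V
  have fx : Fintype ↥(hxi.extend (Set.subset_univ _)) := Set.Finite.fintype (Set.toFinite _)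
  have fy : Fintype ↥(hyi.extend (Set.subset_univ _)) := Set.Finite.fintype (Set.toFinite _)
  have hcard : Fintype.card ↥(hxi.extend (Set.subset_univ _)) =
      Fintype.card ↥(hyi.extend (Set.subset_univ _)) := by
    rw [← Module.finrank_eq_card_basis bx, ← Module.finrank_eq_card_basis by']
  have hxm : x ∈ hxi.extend (Set.subset_univ _) :=
    hxi.subset_extend _ (Set.mem_singleton x)
  have hym : y ∈ hyi.extend (Set.subset_univ _) :=
    hyi.subset_extend _ (Set.mem_singleton y)
  let σ0 := Fintype.equivOfCardEq hcard
  let σ := σ0.trans (Equiv.swap (σ0 ⟨x, hxm⟩) ⟨y, hym⟩)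
  refine ⟨bx.equiv by' σ, ?_⟩
  have h1 : bx ⟨x, hxm⟩ = x := Module.Basis.extend_apply_self hxi ⟨x, hxm⟩
  have h2 : by' ⟨y, hym⟩ = y := Module.Basis.extend_apply_self hyi ⟨y, hym⟩
  calc bx.equiv by' σ x = bx.equiv by' σ (bx ⟨x, hxm⟩) := by rw [h1]
    _ = by' (σ ⟨x, hxm⟩) := bx.equiv_apply _ by' σ
    _ = y := by simp [σ, h2]

lemma Ccol_eq_range {m : ℕ} (A : Matrix (Fin m) (Fin m) F2) :
    Ccol A = LinearMap.range A.mulVecLin := (Matrix.range_mulVecLin A).symm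

lemma finrank_Ccol {m : ℕ} (A : Matrix (Fin m) (Fin m) F2) :
    Module.finrank F2 ↥(Ccol A) = A.rank := by
  rw [Ccol_eq_range, Matrix.rank]

-- cardinality of the count sets is constant over nonzero x
lemma count_const {m k : ℕ} (x y : Fin m → F2) (hx : x ≠ 0) (hy : y ≠ 0) :
    Nat.card {A : Matrix (Fin m) (Fin m) F2 // A.rank = k ∧ x ∈ Ccol A} =
    Nat.card {A : Matrix (Fin m) (Fin m) F2 // A.rank = k ∧ y ∈ Ccol A} := by
  classical
  obtain ⟨e, he⟩ := exists_linEquiv (K := F2) x y hx hy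
  set g := LinearMap.toMatrix' (e : (Fin m → F2) →ₗ[F2] (Fin m → F2)) with hg
  set g' := LinearMap.toMatrix' (e.symm : (Fin m → F2) →ₗ[F2] (Fin m → F2)) with hg'
  have hgg' : g * g' = 1 := by
    rw [hg, hg', ← LinearMap.toMatrix'_comp, ← LinearMap.toMatrix'_id (R := F2) (n := Fin m)]
    congr 1; ext v : 1; simp
  have hg'g : g' * g = 1 := by
    rw [hg, hg', ← LinearMap.toMatrix'_comp, ← LinearMap.toMatrix'_id (R := F2) (n := Fin m)]
    congr 1; ext v : 1; simp
  have hunit : IsUnit g := ⟨⟨g, g', hgg', hg'g⟩, rfl⟩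
  have hdet : IsUnit g.det := (Matrix.isUnit_iff_isUnit_det g).mp hunit
  have hmvg : Matrix.mulVecLin g = (e : (Fin m → F2) →ₗ[F2] (Fin m → F2)) := by
    rw [hg, ← Matrix.toLin'_apply', Matrix.toLin'_toMatrix']
  have hCcol : ∀ A : Matrix (Fin m) (Fin m) F2,
      Ccol (g * A) = (Ccol A).map (e : (Fin m → F2) →ₗ[F2] (Fin m → F2)) := by
    intro A
    rw [Ccol_eq_range, Ccol_eq_range, Matrix.mulVecLin_mul, hmvg, LinearMap.range_comp]
  have hmem : ∀ A : Matrix (Fin m) (Fin m) F2, (x ∈ Ccol A ↔ y ∈ Ccol (g * A)) := by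
    intro A
    rw [hCcol, Submodule.mem_map_equiv]
    have : e.symm y = x := by rw [← he, e.symm_apply_apply]
    rw [this]
  have hrank : ∀ A : Matrix (Fin m) (Fin m) F2, (g * A).rank = A.rank := fun A =>
    Matrix.rank_mul_eq_right_of_isUnit_det g A hdet
  have hginv : ∀ A : Matrix (Fin m) (Fin m) F2, g * (g' * A) = A := by
    intro A; rw [← mul_assoc, hgg', one_mul]
  have hg'inv : ∀ A : Matrix (Fin m) (Fin m) F2, g' * (g * A) = A := by
    intro A; rw [← mul_assoc, hg'g, one_mul]
  refine Nat.card_congr ⟨fun p => ⟨g * p.1, ?_, ?_⟩, fun p => ⟨g' * p.1, ?_, ?_⟩, ?_, ?_⟩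
  · rw [hrank]; exact p.2.1
  · exact (hmem p.1).mp p.2.2
  · rw [← hrank (g' * p.1), hginv]; exact p.2.1
  · rw [hmem (g' * p.1), hginv]; exact p.2.2
  · intro p; ext : 1; exact hg'inv p.1
  · intro p; ext : 1; exact hginv p.1



/-- Counting identity: `(2^k − 1) · |B(m,k)| = (2^m − 1) · W`, where `B(m,k)` is the set
of `m × m` binary matrices of rank `k` and `W` counts those whose column space contains
a fixed nonzero vector `x`. -/
theorem count_matrices_identity (m k : ℕ) (hm : 1 ≤ m) (hk : k ≤ m)
    (x : Fin m → F2) (hx : x ≠ 0) :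
    (2 ^ k - 1) * Nat.card {A : Matrix (Fin m) (Fin m) F2 // A.rank = k} =
    (2 ^ m - 1) * Nat.card {A : Matrix (Fin m) (Fin m) F2 // A.rank = k ∧ x ∈ Ccol A} := by
  classical
  -- inner count for fixed rank-k matrix
  have inner1 : ∀ A : Matrix (Fin m) (Fin m) F2, A.rank = k →
      (univ.filter (fun y : Fin m → F2 => y ∈ Ccol A ∧ y ≠ 0)).card = 2 ^ k - 1 := by
    intro A hA
    have h0 : (0 : Fin m → F2) ∈ univ.filter (fun y : Fin m → F2 => y ∈ Ccol A) := by
      simp [Submodule.zero_mem]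
    have hset : univ.filter (fun y : Fin m → F2 => y ∈ Ccol A ∧ y ≠ 0) =
        (univ.filter (fun y : Fin m → F2 => y ∈ Ccol A)).erase 0 := by
      ext y; simp [and_comm]
    have hcardsub : (univ.filter (fun y : Fin m → F2 => y ∈ Ccol A)).card = 2 ^ k := by
      rw [← Fintype.card_subtype]
      have : Fintype.card {y : Fin m → F2 // y ∈ Ccol A} = Fintype.card ↥(Ccol A) :=
        Fintype.card_congr (Equiv.refl _)
      rw [this, Module.card_eq_pow_finrank (K := F2), ZMod.card, finrank_Ccol, hA]
    rw [hset, Finset.card_erase_of_mem h0, hcardsub]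
  -- double counting
  have key : ∑ A : Matrix (Fin m) (Fin m) F2, ∑ y : Fin m → F2, (if A.rank = k ∧ y ∈ Ccol A ∧ y ≠ 0 then 1 else 0) =
      ∑ y : Fin m → F2, ∑ A : Matrix (Fin m) (Fin m) F2, (if A.rank = k ∧ y ∈ Ccol A ∧ y ≠ 0 then 1 else 0) :=
    Finset.sum_comm
  have lhs : ∑ A : Matrix (Fin m) (Fin m) F2, ∑ y : Fin m → F2, (if A.rank = k ∧ y ∈ Ccol A ∧ y ≠ 0 then 1 else 0) =
      (2 ^ k - 1) * Nat.card {A : Matrix (Fin m) (Fin m) F2 // A.rank = k} := by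
    rw [Nat.card_eq_fintype_card, Fintype.card_subtype]
    rw [← Finset.sum_filter_add_sum_filter_not univ (fun A : Matrix (Fin m) (Fin m) F2 => A.rank = k)]
    have h2 : ∑ A ∈ univ.filter (fun A : Matrix (Fin m) (Fin m) F2 => ¬ A.rank = k),
        ∑ y : Fin m → F2, (if A.rank = k ∧ y ∈ Ccol A ∧ y ≠ 0 then 1 else 0) = 0 := by
      apply Finset.sum_eq_zero
      intro A hA
      rw [Finset.mem_filter] at hA
      apply Finset.sum_eq_zero
      intro y _
      simp [hA.2]
    rw [h2, add_zero]
    rw [Finset.sum_congr rfl (fun A hA => ?_), Finset.sum_const, smul_eq_mul, mul_comm]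
    rw [Finset.mem_filter] at hA
    have : ∀ y : Fin m → F2, (A.rank = k ∧ y ∈ Ccol A ∧ y ≠ 0) ↔ (y ∈ Ccol A ∧ y ≠ 0) := by
      intro y; simp [hA.2]
    simp only [this]
    rw [← Finset.card_filter]
    exact inner1 A hA.2
  have rhs : ∑ y : Fin m → F2, ∑ A : Matrix (Fin m) (Fin m) F2, (if A.rank = k ∧ y ∈ Ccol A ∧ y ≠ 0 then 1 else 0) =
      (2 ^ m - 1) * Nat.card {A : Matrix (Fin m) (Fin m) F2 // A.rank = k ∧ x ∈ Ccol A} := by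
    have hy : ∀ y : Fin m → F2, y ≠ 0 →
        ∑ A : Matrix (Fin m) (Fin m) F2, (if A.rank = k ∧ y ∈ Ccol A ∧ y ≠ 0 then 1 else 0) =
        Nat.card {A : Matrix (Fin m) (Fin m) F2 // A.rank = k ∧ x ∈ Ccol A} := by
      intro y hy0
      have : ∀ A : Matrix (Fin m) (Fin m) F2, (A.rank = k ∧ y ∈ Ccol A ∧ y ≠ 0) ↔ (A.rank = k ∧ y ∈ Ccol A) := by
        intro A; simp [hy0]
      simp only [this]
      rw [← Finset.card_filter, ← Fintype.card_subtype, ← Nat.card_eq_fintype_card]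
      exact (count_const y x hy0 hx)
    rw [← Finset.sum_filter_add_sum_filter_not univ (fun y : Fin m → F2 => y ≠ 0)]
    have h2 : ∑ y ∈ univ.filter (fun y : Fin m → F2 => ¬ y ≠ 0),
        ∑ A : Matrix (Fin m) (Fin m) F2, (if A.rank = k ∧ y ∈ Ccol A ∧ y ≠ 0 then 1 else 0) = 0 := by
      apply Finset.sum_eq_zero
      intro y hy'
      rw [Finset.mem_filter, not_not] at hy'
      apply Finset.sum_eq_zero
      intro A _
      simp [hy'.2]
    rw [h2, add_zero]
    rw [Finset.sum_congr rfl (fun y hyy => hy y (Finset.mem_filter.mp hyy).2),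
      Finset.sum_const, smul_eq_mul]
    congr 1
    rw [Finset.filter_ne' univ (0 : Fin m → F2), Finset.card_erase_of_mem (Finset.mem_univ _),
      Finset.card_univ]
    have : Fintype.card (Fin m → F2) = 2 ^ m := by
      rw [Fintype.card_fun, ZMod.card, Fintype.card_fin]
    rw [this]
  rw [← lhs, key, rhs]
end

section
/- Let Q be a finite qubit set, G ≤ V(Q) any subspace, S = G ∩ C(G), and let k satisfy 2k = dim C(G) − dim S (the number of logical qubits). Then for every subset M ⊆ Q: l_bare(M) + l(Q∖M) = 2k. -/
set_option linter.unusedSectionVars false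

open Finset Matrix

section CleaningAux

variable {Q : Type} [Fintype Q] [DecidableEq Q]

lemma omegaF_comm (u v : PauliSpace Q) : omegaF u v = omegaF v u :=
  Finset.sum_congr rfl (fun q _ => by ring)

/-- The symplectic form as a bilinear map. -/
def Bform : PauliSpace Q →ₗ[F2] PauliSpace Q →ₗ[F2] F2 :=
  LinearMap.mk₂ F2 omegaF omegaF_add_left
    (fun c u w => by rw [omegaF_smul_left, smul_eq_mul])
    (fun u v w => by
      rw [omegaF_comm, omegaF_add_left, omegaF_comm v u, omegaF_comm w u])
    (fun c u w => by rw [omegaF_comm, omegaF_smul_left, omegaF_comm w u, smul_eq_mul])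

@[simp] lemma Bform_apply (u v : PauliSpace Q) : Bform u v = omegaF u v := rfl

lemma mem_pcent {W : Submodule F2 (PauliSpace Q)} {v : PauliSpace Q} :
    v ∈ pcent W ↔ ∀ g ∈ W, omegaF v g = 0 := Iff.rfl

lemma mem_PMod {N : Finset Q} {v : PauliSpace Q} :
    v ∈ PMod N ↔ ∀ q ∉ N, v q = 0 := Iff.rfl

lemma projL_apply (N : Finset Q) (v : PauliSpace Q) (q : Q) :
    projL N v q = if q ∈ N then v q else 0 := rfl

lemma omegaF_projL {v : PauliSpace Q} (g : PauliSpace Q) {N : Finset Q}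
    (hv : v ∈ PMod N) : omegaF v (projL N g) = omegaF v g := by
  refine Finset.sum_congr rfl fun q _ => ?_
  by_cases h : q ∈ N
  · rw [projL_apply, if_pos h]
  · rw [hv q h]
    simp

lemma projL_mem_PMod (N : Finset Q) (v : PauliSpace Q) : projL N v ∈ PMod N := by
  intro q hq
  rw [projL_apply, if_neg hq]

lemma map_projL_le (W : Submodule F2 (PauliSpace Q)) (N : Finset Q) :
    W.map (projL N) ≤ PMod N := by
  rintro _ ⟨g, _, rfl⟩
  exact projL_mem_PMod N g

/-- Cleaning of the centralizer: within `P(N)` centralizing `W` and `W_N` agree. -/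
lemma pcent_map_inf (W : Submodule F2 (PauliSpace Q)) (N : Finset Q) :
    pcent (W.map (projL N)) ⊓ PMod N = pcent W ⊓ PMod N := by
  ext v
  simp only [Submodule.mem_inf]
  constructor
  · rintro ⟨h1, h2⟩
    refine ⟨fun g hg => ?_, h2⟩
    rw [← omegaF_projL g h2]
    exact h1 _ (Submodule.mem_map_of_mem hg)
  · rintro ⟨h1, h2⟩
    refine ⟨?_, h2⟩
    rintro _ ⟨g, hg, rfl⟩
    rw [omegaF_projL g h2]
    exact h1 g hg

lemma Xop_mem_PMod {N : Finset Q} {q : Q} (hq : q ∈ N) : Xop q ∈ PMod N := by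
  intro p hp
  have hne : p ≠ q := by rintro rfl; exact hp hq
  show (if p = q then ((1:F2),(0:F2)) else (0,0)) = 0
  rw [if_neg hne]
  simp

lemma Zop_mem_PMod {N : Finset Q} {q : Q} (hq : q ∈ N) : Zop q ∈ PMod N := by
  intro p hp
  have hne : p ≠ q := by rintro rfl; exact hp hq
  show (if p = q then ((0:F2),(1:F2)) else (0,0)) = 0
  rw [if_neg hne]
  simp

lemma omegaF_Xop (v : PauliSpace Q) (q : Q) : omegaF v (Xop q) = (v q).2 := by
  rw [omegaF, Finset.sum_eq_single q]
  · simp [Xop]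
  · intro p _ hpq; simp [Xop, hpq]
  · simp

lemma omegaF_Zop (v : PauliSpace Q) (q : Q) : omegaF v (Zop q) = (v q).1 := by
  rw [omegaF, Finset.sum_eq_single q]
  · simp [Zop]
  · intro p _ hpq; simp [Zop, hpq]
  · simp

/-- Non-degeneracy of the symplectic form on `P(N)`. -/
lemma pmod_nondeg {N : Finset Q} {v : PauliSpace Q} (hv : v ∈ PMod N)
    (h : ∀ w ∈ PMod N, omegaF v w = 0) : v = 0 := by
  funext q
  by_cases hq : q ∈ N
  · have h1 : (v q).1 = 0 := by rw [← omegaF_Zop v q]; exact h _ (Zop_mem_PMod hq)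
    have h2 : (v q).2 = 0 := by rw [← omegaF_Xop v q]; exact h _ (Xop_mem_PMod hq)
    exact Prod.ext h1 h2
  · exact hv q hq

/-- The key dimension count: `dim (C(W) ∩ P(N)) + dim W_N = dim P(N)`. -/
lemma finrank_pcent_inf (W : Submodule F2 (PauliSpace Q)) (N : Finset Q) :
    Module.finrank F2 ↥(pcent W ⊓ PMod N) + Module.finrank F2 ↥(W.map (projL N))
      = Module.finrank F2 ↥(PMod N) := by
  classical
  set P : Submodule F2 (PauliSpace Q) := PMod N with hP
  set U : Submodule F2 (PauliSpace Q) := W.map (projL N) with hU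
  have hUP : U ≤ P := map_projL_le W N
  -- the pairing map from P to the dual of U
  let Φ : P →ₗ[F2] Module.Dual F2 U :=
    U.subtype.dualMap ∘ₗ (Bform ∘ₗ P.subtype)
  have hΦ : ∀ (v : P) (u : U), Φ v u = omegaF (v : PauliSpace Q) (u : PauliSpace Q) :=
    fun v u => rfl
  -- the pairing map from P to its own dual, which is bijective
  let Ψ : P →ₗ[F2] Module.Dual F2 P :=
    P.subtype.dualMap ∘ₗ (Bform ∘ₗ P.subtype)
  have hΨ : ∀ (v w : P), Ψ v w = omegaF (v : PauliSpace Q) (w : PauliSpace Q) :=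
    fun v w => rfl
  have hΨinj : Function.Injective Ψ := by
    rw [← LinearMap.ker_eq_bot, Submodule.eq_bot_iff]
    intro v hv
    have hz : (v : PauliSpace Q) = 0 := by
      refine pmod_nondeg v.2 fun w hw => ?_
      have := congrArg (fun f => f ⟨w, hw⟩) hv
      simpa [hΨ] using this
    exact Subtype.ext hz
  have hΨsurj : Function.Surjective Ψ := by
    rw [← LinearMap.range_eq_top]
    apply Submodule.eq_top_of_finrank_eq
    rw [LinearMap.finrank_range_of_inj hΨinj, Subspace.dual_finrank_eq]
  -- surjectivity of Φ
  have hΦsurj : Function.Surjective Φ := by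
    intro f
    obtain ⟨g, hg⟩ := LinearMap.dualMap_surjective_of_injective
      (Submodule.inclusion_injective hUP) f
    obtain ⟨v, hv⟩ := hΨsurj g
    refine ⟨v, ?_⟩
    ext u
    have : f u = g (Submodule.inclusion hUP u) := by rw [← hg]; rfl
    rw [hΦ, this, ← hv, hΨ]
    rfl
  -- kernel of Φ
  have hker : LinearMap.ker Φ = Submodule.comap P.subtype (pcent W ⊓ P) := by
    ext v
    simp only [LinearMap.mem_ker, Submodule.mem_comap, Submodule.mem_inf]
    constructor
    · intro hv
      refine ⟨?_, v.2⟩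
      have hmem : (v : PauliSpace Q) ∈ pcent U ⊓ PMod N := by
        refine ⟨fun u hu => ?_, v.2⟩
        have := congrArg (fun f => f ⟨u, hu⟩) hv
        simpa [hΦ] using this
      rw [hU, pcent_map_inf] at hmem
      exact hmem.1
    · rintro ⟨hv, _⟩
      have hmem : (v : PauliSpace Q) ∈ pcent U ⊓ PMod N := by
        rw [hU, pcent_map_inf]; exact ⟨hv, v.2⟩
      ext u
      rw [hΦ]
      exact hmem.1 u.1 u.2
  have hkerrank : Module.finrank F2 ↥(LinearMap.ker Φ)
      = Module.finrank F2 ↥(pcent W ⊓ P) := by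
    rw [hker]
    exact (Submodule.comapSubtypeEquivOfLe inf_le_right).finrank_eq
  have hrn := LinearMap.finrank_range_add_finrank_ker Φ
  rw [LinearMap.range_eq_top.mpr hΦsurj, finrank_top, Subspace.dual_finrank_eq,
    hkerrank] at hrn
  omega

lemma ker_projL (N : Finset Q) :
    LinearMap.ker (projL N : PauliSpace Q →ₗ[F2] PauliSpace Q) = PMod Nᶜ := by
  ext v
  simp only [LinearMap.mem_ker, mem_PMod, Finset.mem_compl, not_not]
  constructor
  · intro h q hq
    have := congrFun h q
    rwa [projL_apply, if_pos hq] at this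
  · intro h
    funext q
    rw [projL_apply]
    by_cases hq : q ∈ N
    · rw [if_pos hq]; exact h q hq
    · rw [if_neg hq]; rfl

/-- Rank-nullity for the projection: `dim W_N + dim W(Nᶜ) = dim W`. -/
lemma finrank_map_projL (W : Submodule F2 (PauliSpace Q)) (N : Finset Q) :
    Module.finrank F2 ↥(W.map (projL N)) + Module.finrank F2 ↥(W ⊓ PMod Nᶜ)
      = Module.finrank F2 ↥W := by
  have hrn := LinearMap.finrank_range_add_finrank_ker ((projL N).domRestrict W)
  rw [LinearMap.range_domRestrict, LinearMap.ker_domRestrict, ker_projL] at hrn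
  have : Submodule.comap W.subtype (PMod Nᶜ)
      = Submodule.comap W.subtype (W ⊓ PMod Nᶜ) := by
    ext v
    simp only [Submodule.mem_comap, Submodule.mem_inf]
    exact ⟨fun h => ⟨v.2, h⟩, fun h => h.2⟩
  have hco : Module.finrank F2 ↥(Submodule.comap W.subtype (W ⊓ PMod Nᶜ))
      = Module.finrank F2 ↥(W ⊓ PMod Nᶜ) :=
    (Submodule.comapSubtypeEquivOfLe inf_le_left).finrank_eq
  rw [this, hco] at hrn
  exact hrn

lemma PMod_univ : PMod (Finset.univ : Finset Q) = ⊤ := by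
  ext v
  simp [mem_PMod]

lemma projL_univ : (projL (Finset.univ : Finset Q) : PauliSpace Q →ₗ[F2] PauliSpace Q)
    = LinearMap.id := by
  apply LinearMap.ext
  intro v
  funext q
  rw [projL_apply, if_pos (Finset.mem_univ q)]
  rfl

lemma finrank_pcent (W : Submodule F2 (PauliSpace Q)) :
    Module.finrank F2 ↥(pcent W) + Module.finrank F2 ↥W
      = Module.finrank F2 (PauliSpace Q) := by
  have := finrank_pcent_inf W (Finset.univ : Finset Q)
  rwa [PMod_univ, projL_univ, Submodule.map_id, inf_top_eq, finrank_top] at this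

lemma PMod_compl_finrank (M : Finset Q) :
    Module.finrank F2 ↥(PMod M) + Module.finrank F2 ↥(PMod Mᶜ)
      = Module.finrank F2 (PauliSpace Q) := by
  have hsup : PMod M ⊔ PMod Mᶜ = ⊤ := by
    rw [eq_top_iff]
    intro v _
    have : v = projL M v + projL Mᶜ v := by
      funext q
      rw [Pi.add_apply, projL_apply, projL_apply]
      by_cases hq : q ∈ M
      · rw [if_pos hq, if_neg (by simp [hq]), add_zero]
      · rw [if_neg hq, if_pos (by simp [hq]), zero_add]
    rw [this]
    exact Submodule.add_mem_sup (projL_mem_PMod M v) (projL_mem_PMod Mᶜ v)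
  have hinf : PMod M ⊓ PMod Mᶜ = ⊥ := by
    rw [eq_bot_iff]
    rintro v ⟨h1, h2⟩
    have : v = 0 := by
      funext q
      by_cases hq : q ∈ M
      · exact h2 q (by simp [hq])
      · exact h1 q hq
    simp [this]
  have := Submodule.finrank_sup_add_finrank_inf_eq (PMod M) (PMod Mᶜ)
  rw [hsup, hinf, finrank_top, finrank_bot, add_zero] at this
  exact this.symm

lemma pstab_le_pcent (G : Submodule F2 (PauliSpace Q)) : pstab G ≤ pcent G :=
  inf_le_right

lemma le_pcent_pstab (G : Submodule F2 (PauliSpace Q)) : G ≤ pcent (pstab G) := by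
  intro g hg s hs
  rw [omegaF_comm]
  exact hs.2 g hg

end CleaningAux

/-- Cleaning identity (Lemma 2 of the paper, after Yoshida-Chuang): for any subsystem
code with `k` logical qubits and any subset `M` of qubits,
`l_bare(M) + l(Q∖M) = 2k`. -/
theorem cleaning_identity {Q : Type} [Fintype Q] [DecidableEq Q]
    (G : Submodule F2 (PauliSpace Q)) (k : ℕ)
    (hk : 2 * k = Module.finrank F2 ↥(pcent G) - Module.finrank F2 ↥(pstab G))
    (M : Finset Q) :
    lbareM G M + lM G Mᶜ = 2 * k := by
  have e1 := finrank_pcent_inf G M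
  have e2 := finrank_pcent_inf (pstab G) Mᶜ
  have e3 := finrank_map_projL G M
  have e4 := finrank_map_projL (pstab G) Mᶜ
  rw [compl_compl] at e4
  have e5 := PMod_compl_finrank M
  have e6 := finrank_pcent G
  have hba : Module.finrank F2 ↥(pstab G ⊓ PMod M)
      ≤ Module.finrank F2 ↥(pcent G ⊓ PMod M) :=
    Submodule.finrank_mono (inf_le_inf_right _ (pstab_le_pcent G))
  have hdc : Module.finrank F2 ↥(G ⊓ PMod Mᶜ)
      ≤ Module.finrank F2 ↥(pcent (pstab G) ⊓ PMod Mᶜ) :=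
    Submodule.finrank_mono (inf_le_inf_right _ (le_pcent_pstab G))
  have hsc : Module.finrank F2 ↥(pstab G) ≤ Module.finrank F2 ↥(pcent G) :=
    Submodule.finrank_mono (pstab_le_pcent G)
  rw [lbareM, lM, pcent_map_inf, pcent_map_inf]
  omega
end

section
/- For all positive integers r and r_s there exists a constant C such that the following holds. For every L and every subspace G ≤ V(Q) on the qubit set Q = Fin L × Fin L that is spanned by generators each supported in some square box of size r×r, and whose stabilizer S = G ∩ C(G) is spanned by generators each supported in some square box of size r_s×r_s, with k ≥ 1 logical qubits and distance d: k·d² ≤ C·L² (i.e. kd² = O(n) with n = L² the number of physical qubits). -/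
set_option linter.unusedSectionVars false

open Finset Matrix

/-- A finite set of lattice sites is contained in some square box of size `r × r`. -/
def InBox {L : ℕ} (r : ℕ) (S : Finset (Fin L × Fin L)) : Prop :=
  ∃ a b : ℕ, ∀ p ∈ S, a ≤ (p.1 : ℕ) ∧ (p.1 : ℕ) < a + r ∧ b ≤ (p.2 : ℕ) ∧ (p.2 : ℕ) < b + r

/-- A subspace has spatially local generators with interaction range `r`: it is spanned
by vectors each supported in some square box of size `r × r`. -/
def HasLocalGens {L : ℕ} (r : ℕ) (G : Submodule F2 (PauliSpace (Fin L × Fin L))) : Prop :=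
  ∃ gens : Set (PauliSpace (Fin L × Fin L)),
    G = Submodule.span F2 gens ∧ ∀ g ∈ gens, InBox r (psupp g)

/-- Cardinality of the boundary `∂M`: the set of sites outside `M` within Chebyshev
distance `r` of some site of `M`. -/
noncomputable def bdryCard {L : ℕ} (r : ℕ) (M : Finset (Fin L × Fin L)) : ℕ :=
  Nat.card {q : Fin L × Fin L // q ∉ M ∧ ∃ p ∈ M,
    Nat.dist (q.1 : ℕ) (p.1 : ℕ) ≤ r ∧ Nat.dist (q.2 : ℕ) (p.2 : ℕ) ≤ r}
namespace KD

open Submodule Module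

variable {Q : Type} [Fintype Q] [DecidableEq Q]

lemma omegaF_comm (u v : PauliSpace Q) : omegaF u v = omegaF v u := by
  unfold omegaF; exact Finset.sum_congr rfl (fun q _ => by ring)

lemma omegaF_add_right (u v w : PauliSpace Q) :
    omegaF u (v + w) = omegaF u v + omegaF u w := by
  rw [omegaF_comm, omegaF_add_left, omegaF_comm v u, omegaF_comm w u]

lemma omegaF_smul_right (c : F2) (u w : PauliSpace Q) :
    omegaF u (c • w) = c * omegaF u w := by
  rw [omegaF_comm, omegaF_smul_left, omegaF_comm w u]

lemma omegaF_zero_left (w : PauliSpace Q) : omegaF 0 w = 0 := by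
  simp [omegaF]

lemma omegaF_zero_right (w : PauliSpace Q) : omegaF w 0 = 0 := by
  rw [omegaF_comm]; exact omegaF_zero_left w

lemma omegaF_sum_left {ι : Type*} (I : Finset ι) (f : ι → PauliSpace Q) (w : PauliSpace Q) :
    omegaF (∑ i ∈ I, f i) w = ∑ i ∈ I, omegaF (f i) w := by
  classical
  induction I using Finset.induction with
  | empty => simp [omegaF_zero_left]
  | insert a s h ih =>
                   rw [Finset.sum_insert h, Finset.sum_insert h, omegaF_add_left, ih]

lemma omegaF_eq_zero_of_disj {u w : PauliSpace Q} (h : ∀ q, u q = 0 ∨ w q = 0) :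
    omegaF u w = 0 := by
  unfold omegaF
  apply Finset.sum_eq_zero
  intro q _
  rcases h q with h' | h' <;> rw [h'] <;> simp

lemma mem_pcent {v : PauliSpace Q} {W : Submodule F2 (PauliSpace Q)} :
    v ∈ pcent W ↔ ∀ g ∈ W, omegaF v g = 0 := Iff.rfl

lemma pcent_antitone {W W' : Submodule F2 (PauliSpace Q)} (h : W ≤ W') :
    pcent W' ≤ pcent W := fun _ hv g hg => hv g (h hg)

lemma le_pcent_pcent (W : Submodule F2 (PauliSpace Q)) : W ≤ pcent (pcent W) :=
  fun w hw g hg => by rw [omegaF_comm]; exact hg w hw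

/-- omega as a bilinear form. -/
noncomputable def Omega : LinearMap.BilinForm F2 (PauliSpace Q) :=
  LinearMap.mk₂ F2 omegaF omegaF_add_left
    (fun c u w => by rw [omegaF_smul_left]; rfl)
    omegaF_add_right (fun c u w => by rw [omegaF_smul_right]; rfl)

lemma Omega_apply (u v : PauliSpace Q) : Omega u v = omegaF u v := rfl

lemma Omega_isRefl : (Omega (Q := Q)).IsRefl := by
  intro u v h
  rw [Omega_apply, omegaF_comm] at h
  exact h

lemma omegaF_Xop (v : PauliSpace Q) (q : Q) : omegaF v (Xop q) = (v q).2 := by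
  unfold omegaF Xop
  rw [Finset.sum_eq_single q]
  · simp
  · intro b _ hb; simp [hb]
  · intro h; exact absurd (Finset.mem_univ q) h

lemma omegaF_Zop (v : PauliSpace Q) (q : Q) : omegaF v (Zop q) = (v q).1 := by
  unfold omegaF Zop
  rw [Finset.sum_eq_single q]
  · simp
  · intro b _ hb; simp [hb]
  · intro h; exact absurd (Finset.mem_univ q) h

lemma Omega_nondeg : (Omega (Q := Q)).Nondegenerate := by
  refine (LinearMap.IsRefl.nondegenerate_iff_separatingLeft Omega_isRefl).mpr ?_
  intro v hv
  funext q
  have h1 := hv (Zop q)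
  have h2 := hv (Xop q)
  rw [Omega_apply, omegaF_Zop] at h1
  rw [Omega_apply, omegaF_Xop] at h2
  exact Prod.ext h1 h2

lemma pcent_eq_orthogonal (W : Submodule F2 (PauliSpace Q)) :
    pcent W = (Omega (Q := Q)).orthogonal W := by
  ext v
  constructor
  · intro hv g hg
    show Omega g v = 0
    rw [Omega_apply, omegaF_comm]
    exact hv g hg
  · intro hv g hg
    have := hv g hg
    rw [Omega_apply, omegaF_comm] at this
    exact this

lemma finrank_add_finrank_pcent (W : Submodule F2 (PauliSpace Q)) :
    finrank F2 W + finrank F2 (pcent W) = finrank F2 (PauliSpace Q) := by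
  rw [pcent_eq_orthogonal, LinearMap.BilinForm.finrank_orthogonal Omega_nondeg W]
  have := Submodule.finrank_le W
  omega

lemma pcent_pcent (W : Submodule F2 (PauliSpace Q)) : pcent (pcent W) = W := by
  symm
  apply Submodule.eq_of_le_of_finrank_le (le_pcent_pcent W)
  have h1 := finrank_add_finrank_pcent W
  have h2 := finrank_add_finrank_pcent (pcent (Q := Q) W)
  omega

lemma pcent_sup (X Y : Submodule F2 (PauliSpace Q)) :
    pcent (X ⊔ Y) = pcent X ⊓ pcent Y := by
  apply le_antisymm
  · exact le_inf (pcent_antitone le_sup_left) (pcent_antitone le_sup_right)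
  · rintro v ⟨hvX, hvY⟩ g hg
    rcases Submodule.mem_sup.mp hg with ⟨x, hx, y, hy, rfl⟩
    rw [omegaF_add_right, hvX x hx, hvY y hy, add_zero]

lemma pcent_span_iff (S : Set (PauliSpace Q)) (v : PauliSpace Q) :
    v ∈ pcent (span F2 S) ↔ ∀ g ∈ S, omegaF v g = 0 := by
  constructor
  · intro hv g hg
    exact hv g (Submodule.subset_span hg)
  · intro h g hg
    induction hg using Submodule.span_induction with
    | mem x hx => exact h x hx
    | zero => exact omegaF_zero_right v
    | add x y _ _ ihx ihy => rw [omegaF_add_right, ihx, ihy, add_zero]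
    | smul c x _ ihx => rw [omegaF_smul_right, ihx, mul_zero]

end KD
namespace KD

open Submodule Module Finset

variable {Q : Type} [Fintype Q] [DecidableEq Q]

lemma mem_psupp {v : PauliSpace Q} {q : Q} : q ∈ psupp v ↔ v q ≠ 0 := by
  unfold psupp
  simp only [Finset.mem_filter, Finset.mem_univ, true_and]
  rfl

lemma not_mem_psupp {v : PauliSpace Q} {q : Q} : q ∉ psupp v ↔ v q = 0 := by
  rw [mem_psupp]; tauto

lemma mem_PMod {v : PauliSpace Q} {M : Finset Q} : v ∈ PMod M ↔ ∀ q ∉ M, v q = 0 := Iff.rfl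

lemma mem_PMod_iff_psupp {v : PauliSpace Q} {M : Finset Q} :
    v ∈ PMod M ↔ psupp v ⊆ M := by
  rw [mem_PMod]
  constructor
  · intro h q hq
    by_contra hqM
    exact (mem_psupp.mp hq) (h q hqM)
  · intro h q hq
    by_contra hv
    exact hq (h (mem_psupp.mpr hv))

lemma pwt_le_card {v : PauliSpace Q} {M : Finset Q} (h : psupp v ⊆ M) : pwt v ≤ M.card :=
  Finset.card_le_card h

lemma eq_zero_of_psupp_empty {v : PauliSpace Q} (h : ∀ q, q ∉ psupp v) : v = 0 := by
  funext q
  exact not_mem_psupp.mp (h q)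

lemma pcent_PMod (M : Finset Q) : pcent (PMod M) = PMod Mᶜ := by
  ext v
  constructor
  · intro hv q hq
    rw [Finset.mem_compl, not_not] at hq
    have hX : Xop q ∈ PMod M := by
      intro p hp
      unfold Xop
      have : p ≠ q := fun h => hp (h ▸ hq)
      simp [this]
    have hZ : Zop q ∈ PMod M := by
      intro p hp
      unfold Zop
      have : p ≠ q := fun h => hp (h ▸ hq)
      simp [this]
    have h1 := hv (Xop q) hX
    have h2 := hv (Zop q) hZ
    rw [omegaF_Xop] at h1
    rw [omegaF_Zop] at h2
    exact Prod.ext h2 h1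
  · intro hv w hw
    apply omegaF_eq_zero_of_disj
    intro q
    by_cases hq : q ∈ M
    · left; exact hv q (by simp [hq])
    · right; exact hw q hq

lemma pcent_PMod_compl (M : Finset Q) : pcent (PMod Mᶜ) = PMod M := by
  rw [pcent_PMod, compl_compl]

/-- Correctability predicate: every dressed logical operator supported on `M` is trivial. -/
def Corr (G : Submodule F2 (PauliSpace Q)) (M : Finset Q) : Prop :=
  ∀ v ∈ pcent (pstab G), psupp v ⊆ M → v ∈ G

lemma corr_iff {G : Submodule F2 (PauliSpace Q)} {M : Finset Q} :
    Corr G M ↔ pcent (pstab G) ⊓ PMod M ≤ G := by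
  constructor
  · rintro h v ⟨hv1, hv2⟩
    exact h v hv1 (mem_PMod_iff_psupp.mp hv2)
  · intro h v hv hsupp
    exact h ⟨hv, mem_PMod_iff_psupp.mpr hsupp⟩

lemma pstab_le_self (G : Submodule F2 (PauliSpace Q)) : pstab G ≤ G := inf_le_left

lemma pstab_le_pcent (G : Submodule F2 (PauliSpace Q)) : pstab G ≤ pcent G := inf_le_right

lemma self_le_pcent_pstab (G : Submodule F2 (PauliSpace Q)) : G ≤ pcent (pstab G) := by
  intro g hg s hs
  rw [omegaF_comm]
  exact hs.2 g hg

/-- Dressed cleaning (abstract form): if `M` is correctable then every dressed logical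
operator can be pushed off `M` using a gauge element. -/
lemma clean_off (G : Submodule F2 (PauliSpace Q)) (M : Finset Q) (h : Corr G M) :
    pcent (pstab G) ≤ G ⊔ PMod Mᶜ := by
  have hb : pcent G ⊓ PMod M ≤ pstab G := by
    intro v ⟨hv1, hv2⟩
    refine ⟨?_, hv1⟩
    have : v ∈ pcent (pstab G) := pcent_antitone (pstab_le_self G) hv1
    exact (corr_iff.mp h) ⟨this, hv2⟩
  have key : pcent (G ⊔ PMod Mᶜ) ≤ pstab G := by
    rw [pcent_sup, pcent_PMod_compl]
    exact hb
  calc pcent (pstab G) ≤ pcent (pcent (G ⊔ PMod Mᶜ)) := pcent_antitone key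
    _ = G ⊔ PMod Mᶜ := pcent_pcent _

/-- Bare cleaning: if `M`'s complement... if `A` is correctable then every bare logical
operator can be pushed onto `Aᶜ` using a stabilizer element. -/
lemma bare_clean (G : Submodule F2 (PauliSpace Q)) (A : Finset Q) (h : Corr G A) :
    pcent G ≤ pstab G ⊔ PMod Aᶜ := by
  have key : pcent (pstab G ⊔ PMod Aᶜ) ≤ G := by
    rw [pcent_sup, pcent_PMod_compl]
    exact corr_iff.mp h
  have h2 : pcent G ≤ pcent (pcent (pstab G ⊔ PMod Aᶜ)) := pcent_antitone key
  rwa [pcent_pcent] at h2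

end KD
namespace KD

open Submodule Module Finset

variable {Q : Type} [Fintype Q] [DecidableEq Q]

lemma projL_apply (M : Finset Q) (v : PauliSpace Q) (q : Q) :
    projL M v q = if q ∈ M then v q else 0 := rfl

lemma psupp_projL (M : Finset Q) (v : PauliSpace Q) : psupp (projL M v) ⊆ M := by
  intro q hq
  rw [mem_psupp, projL_apply] at hq
  by_contra h
  rw [if_neg h] at hq
  exact hq rfl

lemma sum_projL {ι : Type} [DecidableEq ι] (I : Finset ι) (P : ι → Finset Q)
    (hdisj : ∀ i ∈ I, ∀ j ∈ I, i ≠ j → ∀ q, q ∈ P i → q ∉ P j)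
    (v : PauliSpace Q) (hsupp : ∀ q, v q ≠ 0 → ∃ i ∈ I, q ∈ P i) :
    v = ∑ i ∈ I, projL (P i) v := by
  funext q
  rw [Finset.sum_apply]
  by_cases h : ∃ i ∈ I, q ∈ P i
  · obtain ⟨i₀, hi₀, hq₀⟩ := h
    rw [Finset.sum_eq_single i₀]
    · rw [projL_apply, if_pos hq₀]
    · intro j hj hji
      rw [projL_apply, if_neg (hdisj i₀ hi₀ j hj (Ne.symm hji) q hq₀)]
    · intro hi; exact absurd hi₀ hi
  · have hv : v q = 0 := by
      by_contra hv
      exact h (hsupp q hv)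
    rw [hv]
    symm
    apply Finset.sum_eq_zero
    intro j hj
    rw [projL_apply]
    split
    · exact hv
    · rfl

end KD

namespace KD

open Submodule Module Finset

variable {L : ℕ}

abbrev QL (L : ℕ) := Fin L × Fin L

lemma inBox_mono {r s : ℕ} (h : r ≤ s) {S : Finset (QL L)} (hS : InBox r S) : InBox s S := by
  obtain ⟨a, b, hab⟩ := hS
  exact ⟨a, b, fun p hp => by have := hab p hp; omega⟩

lemma dist_lt_of_inBox {s : ℕ} {S : Finset (QL L)} (hS : InBox s S) {p p' : QL L}
    (hp : p ∈ S) (hp' : p' ∈ S) :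
    Nat.dist (p.1 : ℕ) (p'.1 : ℕ) < s ∧ Nat.dist (p.2 : ℕ) (p'.2 : ℕ) < s := by
  obtain ⟨a, b, hab⟩ := hS
  have h1 := hab p hp
  have h2 := hab p' hp'
  unfold Nat.dist
  omega

/-- The union lemma: if `v` commutes with a set of box-local generators and is supported
on a disjoint union of pairwise well-separated regions, then each restriction of `v`
to a region also commutes with all the generators. -/
lemma union_lemma (gens : Set (PauliSpace (QL L))) (s : ℕ) (hs : 1 ≤ s)
    (hloc : ∀ g ∈ gens, InBox s (psupp g)) {ι : Type} [DecidableEq ι] (I : Finset ι)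
    (P : ι → Finset (QL L))
    (hsep : ∀ i ∈ I, ∀ j ∈ I, i ≠ j → ∀ p ∈ P i, ∀ p' ∈ P j,
      s ≤ Nat.dist (p.1 : ℕ) (p'.1 : ℕ) ∨ s ≤ Nat.dist (p.2 : ℕ) (p'.2 : ℕ))
    (v : PauliSpace (QL L)) (hv : v ∈ pcent (span F2 gens))
    (hsupp : ∀ q, v q ≠ 0 → ∃ i ∈ I, q ∈ P i) :
    (∀ i ∈ I, projL (P i) v ∈ pcent (span F2 gens)) ∧ v = ∑ i ∈ I, projL (P i) v := by
  have hdisj : ∀ i ∈ I, ∀ j ∈ I, i ≠ j → ∀ q, q ∈ P i → q ∉ P j := by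
    intro i hi j hj hij q hqi hqj
    have := hsep i hi j hj hij q hqi q hqj
    simp only [Nat.dist_self] at this
    omega
  have hsum := sum_projL I P hdisj v hsupp
  refine ⟨?_, hsum⟩
  intro i hi
  rw [pcent_span_iff]
  intro g hg
  by_cases htouch : ∃ q ∈ psupp g, q ∈ P i
  · -- the box of g touches P i, hence no other piece
    obtain ⟨q₀, hq₀g, hq₀i⟩ := htouch
    have hothers : ∀ j ∈ I, j ≠ i → omegaF (projL (P j) v) g = 0 := by
      intro j hj hji
      apply omegaF_eq_zero_of_disj
      intro q
      by_cases hqj : q ∈ P j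
      · right
        by_contra hgq
        have hqg : q ∈ psupp g := mem_psupp.mpr hgq
        have hd := dist_lt_of_inBox (hloc g hg) hqg hq₀g
        have := hsep j hj i hi hji q hqj q₀ hq₀i
        omega
      · left
        rw [projL_apply, if_neg hqj]
    have h0 : omegaF v g = 0 := hv g (Submodule.subset_span hg)
    rw [hsum, omegaF_sum_left] at h0
    rw [Finset.sum_eq_single i] at h0
    · exact h0
    · intro j hj hji; exact hothers j hj hji
    · intro h; exact absurd hi h
  · -- g's support misses P i entirely
    apply omegaF_eq_zero_of_disj
    intro q
    by_cases hqi : q ∈ P i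
    · right
      by_contra hgq
      exact htouch ⟨q, mem_psupp.mpr hgq, hqi⟩
    · left
      rw [projL_apply, if_neg hqi]

end KD
namespace KD

open Submodule Module Finset

variable {L : ℕ}

/-- Chebyshev collar of radius `< s` around `M`. -/
def collar (s : ℕ) (M : Finset (QL L)) : Finset (QL L) :=
  univ.filter (fun q => ∃ p ∈ M, Nat.dist (q.1 : ℕ) (p.1 : ℕ) < s ∧
    Nat.dist (q.2 : ℕ) (p.2 : ℕ) < s)

lemma mem_collar {s : ℕ} {M : Finset (QL L)} {q : QL L} :
    q ∈ collar s M ↔ ∃ p ∈ M, Nat.dist (q.1 : ℕ) (p.1 : ℕ) < s ∧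
      Nat.dist (q.2 : ℕ) (p.2 : ℕ) < s := by
  unfold collar; simp

/-- Local cleaning: a dressed logical operator can be pushed off a correctable region
using a gauge element supported near its own support and the collar of the region. -/
lemma local_clean (G : Submodule F2 (PauliSpace (QL L))) (gens : Set (PauliSpace (QL L)))
    (s : ℕ) (hspan : G = span F2 gens) (hloc : ∀ g ∈ gens, InBox s (psupp g))
    (M : Finset (QL L)) (hcorr : Corr G M) (v : PauliSpace (QL L))
    (hv : v ∈ pcent (pstab G)) :
    ∃ u ∈ pcent (pstab G), v - u ∈ G ∧ psupp u ⊆ (psupp v ∪ collar s M) \ M := by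
  classical
  have hmem : v ∈ G ⊔ PMod Mᶜ := clean_off G M hcorr hv
  rcases Submodule.mem_sup.mp hmem with ⟨g₀, hg₀, w, hw, hvw⟩
  rw [hspan] at hg₀
  rcases mem_span_set.mp hg₀ with ⟨c, hcsupp, hcsum⟩
  set F : Finset (PauliSpace (QL L)) :=
    c.support.filter (fun g => ∃ p ∈ psupp g, p ∈ M) with hF
  set gn : PauliSpace (QL L) := ∑ g ∈ F, c g • g with hgn
  set gf : PauliSpace (QL L) := ∑ g ∈ c.support \ F, c g • g with hgf
  have hsplit : gf + gn = g₀ := by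
    rw [hgn, hgf, ← hcsum]
    exact Finset.sum_sdiff (Finset.filter_subset _ _)
  have hgnG : gn ∈ G := by
    rw [hspan, hgn]
    exact Submodule.sum_mem _ (fun g hg => Submodule.smul_mem _ _
      (Submodule.subset_span (hcsupp (Finset.mem_filter.mp hg).1)))
  refine ⟨v - gn, ?_, ?_, ?_⟩
  · exact sub_mem hv (self_le_pcent_pstab G hgnG)
  · simpa using hgnG
  · intro q hq
    rw [mem_psupp] at hq
    rw [Finset.mem_sdiff, Finset.mem_union]
    constructor
    · -- q ∈ psupp v ∪ collar s M
      by_contra hcon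
      push_neg at hcon
      obtain ⟨hqv, hqc⟩ := hcon
      have hv0 : v q = 0 := not_mem_psupp.mp hqv
      have hgn0 : gn q = 0 := by
        rw [hgn, Finset.sum_apply]
        apply Finset.sum_eq_zero
        intro g hg
        rcases Finset.mem_filter.mp hg with ⟨hgc, p₀, hp₀g, hp₀M⟩
        have hgq0 : g q = 0 := by
          by_contra hgq
          have hqg : q ∈ psupp g := mem_psupp.mpr hgq
          have hd := dist_lt_of_inBox (hloc g (hcsupp hgc)) hqg hp₀g
          exact hqc (mem_collar.mpr ⟨p₀, hp₀M, hd⟩)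
        show c g • g q = 0
        rw [hgq0, smul_zero]
      exact hq (by rw [Pi.sub_apply, hv0, hgn0, sub_zero])
    · -- q ∉ M
      intro hqM
      have hw0 : w q = 0 := hw q (by simp [hqM])
      have hgf0 : gf q = 0 := by
        rw [hgf, Finset.sum_apply]
        apply Finset.sum_eq_zero
        intro g hg
        rcases Finset.mem_sdiff.mp hg with ⟨hgc, hnot⟩
        have hgq0 : g q = 0 := by
          by_contra hgq
          exact hnot (Finset.mem_filter.mpr ⟨hgc, ⟨q, mem_psupp.mpr hgq, hqM⟩⟩)
        show c g • g q = 0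
        rw [hgq0, smul_zero]
      apply hq
      have : v = gf + gn + w := by rw [hsplit, hvw]
      rw [Pi.sub_apply, this]
      simp [hgf0, hw0]

/-- Expansion: a correctable region can be enlarged provided the enlargement together
with the collar is smaller than the distance. -/
lemma expand_step (G : Submodule F2 (PauliSpace (QL L))) (gens : Set (PauliSpace (QL L)))
    (s : ℕ) (hspan : G = span F2 gens) (hloc : ∀ g ∈ gens, InBox s (psupp g))
    (d : ℕ) (hd : ∀ v ∈ pcent (pstab G), v ∉ G → d ≤ pwt v)
    (M D N : Finset (QL L)) (hM : Corr G M) (hsize : D.card < d)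
    (hND : ∀ q ∈ N, q ∉ M → q ∈ D)
    (hcoll : ∀ q ∈ collar s M, q ∉ M → q ∈ D) :
    Corr G N := by
  intro v hv hsupp
  obtain ⟨u, hu, hvu, husupp⟩ := local_clean G gens s hspan hloc M hM v hv
  have huD : psupp u ⊆ D := by
    intro q hq
    have hq' := husupp hq
    rw [Finset.mem_sdiff, Finset.mem_union] at hq'
    rcases hq'.1 with h | h
    · exact hND q (hsupp h) hq'.2
    · exact hcoll q h hq'.2
  have huG : u ∈ G := by
    by_contra hun
    have := hd u hu hun
    have := pwt_le_card huD
    omega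
  have : v = (v - u) + u := by ring
  rw [this]
  exact Submodule.add_mem G hvu huG

/-- An axis-aligned (clipped) rectangle of lattice sites. -/
def Rct (x₁ x₂ y₁ y₂ : ℕ) : Finset (QL L) :=
  univ.filter (fun p => x₁ ≤ (p.1 : ℕ) ∧ (p.1 : ℕ) < x₂ ∧ y₁ ≤ (p.2 : ℕ) ∧ (p.2 : ℕ) < y₂)

lemma mem_Rct {x₁ x₂ y₁ y₂ : ℕ} {p : QL L} :
    p ∈ (Rct x₁ x₂ y₁ y₂ : Finset (QL L)) ↔
      x₁ ≤ (p.1 : ℕ) ∧ (p.1 : ℕ) < x₂ ∧ y₁ ≤ (p.2 : ℕ) ∧ (p.2 : ℕ) < y₂ := by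
  unfold Rct; simp

lemma card_Rct (x₁ x₂ y₁ y₂ : ℕ) :
    (Rct x₁ x₂ y₁ y₂ : Finset (QL L)).card ≤ (x₂ - x₁) * (y₂ - y₁) := by
  have : (Rct x₁ x₂ y₁ y₂ : Finset (QL L)).card ≤
      ((Finset.range (x₂ - x₁)) ×ˢ (Finset.range (y₂ - y₁))).card := by
    apply Finset.card_le_card_of_injOn
      (fun p => ((p.1 : ℕ) - x₁, (p.2 : ℕ) - y₁))
    · intro p hp
      rw [Finset.mem_coe, mem_Rct] at hp
      simp only [Finset.mem_coe, Finset.mem_product, Finset.mem_range]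
      omega
    · intro p hp p' hp' heq
      simp only [Finset.mem_coe, mem_Rct] at hp hp'
      have h1 : (p.1 : ℕ) - x₁ = (p'.1 : ℕ) - x₁ := congrArg Prod.fst heq
      have h2 : (p.2 : ℕ) - y₁ = (p'.2 : ℕ) - y₁ := congrArg Prod.snd heq
      have : (p.1 : ℕ) = (p'.1 : ℕ) := by omega
      have : p.1 = p'.1 := Fin.ext this
      have h2' : (p.2 : ℕ) = (p'.2 : ℕ) := by omega
      have : p.2 = p'.2 := Fin.ext h2'
      exact Prod.ext ‹p.1 = p'.1› this
  rw [Finset.card_product, Finset.card_range, Finset.card_range] at this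
  exact this

lemma step_D_subset (s a b t h : ℕ) (hs : 1 ≤ s) :
    ((Rct (a+t) (a+t+1) b (b+h) ∪ collar s (Rct a (a+t) b (b+h))) \ Rct a (a+t) b (b+h)
        : Finset (QL L)) ⊆
      (Rct (a-s) a (b-s) (b+h+s) ∪ Rct (a+t) (a+t+s) (b-s) (b+h+s)
        ∪ Rct (a-s) (a+t+s) (b-s) b ∪ Rct (a-s) (a+t+s) (b+h) (b+h+s)) := by
  intro q hq
  rw [Finset.mem_sdiff, Finset.mem_union] at hq
  obtain ⟨hin, hout⟩ := hq
  rw [mem_Rct] at hout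
  push_neg at hout
  simp only [Finset.mem_union, mem_Rct]
  rcases hin with hcol | hcl
  · rw [mem_Rct] at hcol
    left; left; right
    omega
  · rw [mem_collar] at hcl
    obtain ⟨p, hp, hd1, hd2⟩ := hcl
    rw [mem_Rct] at hp
    unfold Nat.dist at hd1 hd2
    -- q is within s-1 of the rectangle; case on which side it sticks out
    by_cases hx1 : (q.1 : ℕ) < a
    · left; left; left; omega
    · by_cases hx2 : a + t ≤ (q.1 : ℕ)
      · left; left; right; omega
      · by_cases hy1 : (q.2 : ℕ) < b
        · left; right; omega
        · right; omega

lemma step_D_card (s a b t h : ℕ) (hs : 1 ≤ s) :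
    ((Rct (a+t) (a+t+1) b (b+h) ∪ collar s (Rct a (a+t) b (b+h))) \ Rct a (a+t) b (b+h)
        : Finset (QL L)).card ≤ 2*s*(h+2*s) + 2*s*(t+2*s) := by
  have hsub := step_D_subset (L := L) s a b t h hs
  calc _ ≤ _ := Finset.card_le_card hsub
    _ ≤ (Rct (a-s) a (b-s) (b+h+s) ∪ Rct (a+t) (a+t+s) (b-s) (b+h+s)
          ∪ Rct (a-s) (a+t+s) (b-s) b : Finset (QL L)).card
        + (Rct (a-s) (a+t+s) (b+h) (b+h+s) : Finset (QL L)).card := Finset.card_union_le _ _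
    _ ≤ ((Rct (a-s) a (b-s) (b+h+s) ∪ Rct (a+t) (a+t+s) (b-s) (b+h+s) : Finset (QL L)).card
        + (Rct (a-s) (a+t+s) (b-s) b : Finset (QL L)).card)
        + (Rct (a-s) (a+t+s) (b+h) (b+h+s) : Finset (QL L)).card := by
          have := Finset.card_union_le
            (Rct (a-s) a (b-s) (b+h+s) ∪ Rct (a+t) (a+t+s) (b-s) (b+h+s) : Finset (QL L))
            (Rct (a-s) (a+t+s) (b-s) b : Finset (QL L))
          omega
    _ ≤ (((Rct (a-s) a (b-s) (b+h+s) : Finset (QL L)).card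
        + (Rct (a+t) (a+t+s) (b-s) (b+h+s) : Finset (QL L)).card)
        + (Rct (a-s) (a+t+s) (b-s) b : Finset (QL L)).card)
        + (Rct (a-s) (a+t+s) (b+h) (b+h+s) : Finset (QL L)).card := by
          have := Finset.card_union_le (Rct (a-s) a (b-s) (b+h+s) : Finset (QL L))
            (Rct (a+t) (a+t+s) (b-s) (b+h+s) : Finset (QL L))
          omega
    _ ≤ 2*s*(h+2*s) + 2*s*(t+2*s) := by
          have c1 := card_Rct (L := L) (a-s) a (b-s) (b+h+s)
          have c2 := card_Rct (L := L) (a+t) (a+t+s) (b-s) (b+h+s)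
          have c3 := card_Rct (L := L) (a-s) (a+t+s) (b-s) b
          have c4 := card_Rct (L := L) (a-s) (a+t+s) (b+h) (b+h+s)
          have e1 : (a - (a-s)) ≤ s := by omega
          have e2 : (b+h+s - (b-s)) ≤ h + 2*s := by omega
          have e3 : (a+t+s - (a+t)) = s := by omega
          have e4 : (a+t+s - (a-s)) ≤ t + 2*s := by omega
          have e5 : (b - (b-s)) ≤ s := by omega
          have e6 : (b+h+s - (b+h)) = s := by omega
          calc _ ≤ ((a - (a-s)) * (b+h+s - (b-s)) + (a+t+s - (a+t)) * (b+h+s - (b-s)))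
                    + (a+t+s - (a-s)) * (b - (b-s)) + (a+t+s - (a-s)) * (b+h+s - (b+h)) := by
                  omega
            _ ≤ (s * (h+2*s) + s * (h+2*s)) + (t+2*s) * s + (t+2*s) * s := by
                  gcongr <;> omega
            _ = 2*s*(h+2*s) + 2*s*(t+2*s) := by ring

/-- Growth of rectangles: any rectangle whose perimeter is small compared to `d`
is correctable. -/
lemma rect_corr (G : Submodule F2 (PauliSpace (QL L))) (gens : Set (PauliSpace (QL L)))
    (s : ℕ) (hs : 1 ≤ s) (hspan : G = span F2 gens) (hloc : ∀ g ∈ gens, InBox s (psupp g))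
    (d : ℕ) (hd : ∀ v ∈ pcent (pstab G), v ∉ G → d ≤ pwt v)
    (a b w h : ℕ) (hsz : 2*s*(h+2*s) + 2*s*(w+2*s) < d) :
    Corr G (Rct a (a+w) b (b+h)) := by
  induction w with
  | zero =>
    intro v hv hsupp
    have : v = 0 := by
      apply eq_zero_of_psupp_empty
      intro q hq
      have := hsupp hq
      rw [mem_Rct] at this
      omega
    rw [this]
    exact Submodule.zero_mem G
  | succ t ih =>
    have hmono : 2*s*(t+2*s) ≤ 2*s*(t+1+2*s) := Nat.mul_le_mul_left _ (by omega)
    have hsz' : 2*s*(h+2*s) + 2*s*(t+2*s) < d := by omega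
    have hM := ih (by omega)
    apply expand_step G gens s hspan hloc d hd (Rct a (a+t) b (b+h))
      ((Rct (a+t) (a+t+1) b (b+h) ∪ collar s (Rct a (a+t) b (b+h))) \ Rct a (a+t) b (b+h))
      _ hM
    · have := step_D_card (L := L) s a b t h hs
      omega
    · intro q hq hqM
      rw [Finset.mem_sdiff, Finset.mem_union]
      refine ⟨Or.inl ?_, hqM⟩
      rw [mem_Rct] at hq hqM ⊢
      push_neg at hqM
      omega
    · intro q hq hqM
      rw [Finset.mem_sdiff, Finset.mem_union]
      exact ⟨Or.inr hq, hqM⟩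

end KD
namespace KD

open Submodule Module Finset

/-- 1-D separation: different blocks, offsets below `ℓ`. -/
lemma sep1 {B ℓ ρ a a' xm xm' : ℕ} (hB : B = ℓ + ρ) (hℓ : 2*ρ+1 ≤ ℓ)
    (hblk : ∀ u u' : ℕ, u < u' → B*u + B ≤ B*u')
    (ha : a ≠ a') (h1 : xm < ℓ) (h2 : xm' < ℓ) :
    ρ ≤ Nat.dist (B*a + xm) (B*a' + xm') := by
  unfold Nat.dist
  rcases Nat.lt_trichotomy a a' with h | h | h
  · have := hblk a a' h; omega
  · exact absurd h ha
  · have := hblk a' a h; omega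

/-- 1-D separation: different blocks, offsets in the gap `[ℓ, B)`. -/
lemma sep2 {B ℓ ρ a a' xm xm' : ℕ} (hB : B = ℓ + ρ) (hℓ : 2*ρ+1 ≤ ℓ)
    (hblk : ∀ u u' : ℕ, u < u' → B*u + B ≤ B*u')
    (ha : a ≠ a') (h1 : ℓ ≤ xm) (h1' : xm < B) (h2 : ℓ ≤ xm') (h2' : xm' < B) :
    ρ ≤ Nat.dist (B*a + xm) (B*a' + xm') := by
  unfold Nat.dist
  rcases Nat.lt_trichotomy a a' with h | h | h
  · have := hblk a a' h; omega
  · exact absurd h ha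
  · have := hblk a' a h; omega

/-- 1-D separation: trimmed segment offset vs gap offset, arbitrary blocks. -/
lemma sep3 {B ℓ ρ a a' xm xm' : ℕ} (hB : B = ℓ + ρ) (hℓ : 2*ρ+1 ≤ ℓ)
    (hblk : ∀ u u' : ℕ, u < u' → B*u + B ≤ B*u')
    (h1 : ρ ≤ xm) (h1' : xm + ρ < ℓ) (h2 : ℓ ≤ xm') (h2' : xm' < B) :
    ρ ≤ Nat.dist (B*a + xm) (B*a' + xm') := by
  unfold Nat.dist
  rcases Nat.lt_trichotomy a a' with h | h | h
  · have := hblk a a' h; omega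
  · subst h; omega
  · have := hblk a' a h; omega

/-- If the whole lattice is correctable, there are no logical qubits. -/
lemma big_d_case {L : ℕ} (G : Submodule F2 (PauliSpace (QL L))) (ρ : ℕ)
    (gensG : Set (PauliSpace (QL L))) (d k : ℕ) (hρ : 1 ≤ ρ)
    (hGspan : G = Submodule.span F2 gensG) (hGloc : ∀ g ∈ gensG, InBox ρ (psupp g))
    (hd : ∀ v ∈ pcent (pstab G), v ∉ G → d ≤ pwt v)
    (hk : Module.finrank F2 (pcent G) = Module.finrank F2 (pstab G) + 2*k)
    (hd64 : 64*ρ^2 ≤ d) (hbig : 8*ρ*(L+1) ≤ d) : k = 0 := by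
  have hcorr : Corr G (Rct 0 (0+L) 0 (0+L)) := by
    apply rect_corr G gensG ρ hρ hGspan hGloc d hd
    have e : 2*ρ*(L+2*ρ) + 2*ρ*(L+2*ρ) = 4*(ρ*L) + 8*(ρ*ρ) := by ring
    have e1 : 8*ρ*(L+1) = 8*(ρ*L) + 8*ρ := by ring
    have e2 : 64*ρ^2 = 64*(ρ*ρ) := by ring
    have hρρ : 1 ≤ ρ*ρ := Nat.one_le_iff_ne_zero.mpr (by positivity)
    omega
  have huniv : pcent (pstab G) ≤ G := by
    intro v hv
    apply hcorr v hv
    intro q _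
    rw [mem_Rct]
    refine ⟨Nat.zero_le _, by simpa using q.1.isLt, Nat.zero_le _, by simpa using q.2.isLt⟩
  have h1 : pcent G ≤ pstab G := by
    intro v hv
    exact ⟨huniv (pcent_antitone (pstab_le_self G) hv), hv⟩
  have := Submodule.finrank_mono h1
  omega

end KD
namespace KD

open Submodule Module Finset

/-- The main counting bound: `k ≤ 6ρ²·(L/B+1)²` with `B = d/(8ρ)+ρ`. -/
lemma main_count {L : ℕ} (G : Submodule F2 (PauliSpace (QL L))) (ρ : ℕ)
    (gensG gensS : Set (PauliSpace (QL L))) (d k : ℕ) (hρ : 1 ≤ ρ)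
    (hGspan : G = Submodule.span F2 gensG) (hGloc : ∀ g ∈ gensG, InBox ρ (psupp g))
    (hSspan : pstab G = Submodule.span F2 gensS) (hSloc : ∀ g ∈ gensS, InBox ρ (psupp g))
    (hd : ∀ v ∈ pcent (pstab G), v ∉ G → d ≤ pwt v)
    (hk : Module.finrank F2 (pcent G) = Module.finrank F2 (pstab G) + 2*k)
    (hd64 : 64*ρ^2 ≤ d) :
    k ≤ 6*ρ^2*(L/(d/(8*ρ)+ρ)+1)^2 := by
  classical
  set ℓ : ℕ := d/(8*ρ) with hℓdef
  set B : ℕ := ℓ + ρ with hBdef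
  set nb : ℕ := L/B + 1 with hnbdef
  have hρρ : 1 ≤ ρ*ρ := Nat.one_le_iff_ne_zero.mpr (by positivity)
  have hd64' : 64*(ρ*ρ) ≤ d := by
    have e0 : 64*ρ^2 = 64*(ρ*ρ) := by ring
    omega
  have h8ρ : 0 < 8*ρ := by omega
  have hℓ8 : 8*ρ ≤ ℓ := by
    rw [hℓdef, Nat.le_div_iff_mul_le h8ρ]
    have : 8*ρ*(8*ρ) = 64*(ρ*ρ) := by ring
    omega
  have hℓρ : 2*ρ+1 ≤ ℓ := by omega
  have h8ℓ : 8*(ρ*ℓ) ≤ d := by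
    have h1 : ℓ*(8*ρ) ≤ d := by rw [hℓdef]; exact Nat.div_mul_le_self d (8*ρ)
    have h2 : ℓ*(8*ρ) = 8*(ρ*ℓ) := by ring
    omega
  have hB0 : 0 < B := by omega
  have hblk : ∀ u u' : ℕ, u < u' → B*u + B ≤ B*u' := by
    intro u u' h
    have h2 : B*(u+1) ≤ B*u' := Nat.mul_le_mul_left B h
    have e : B*(u+1) = B*u + B := by ring
    omega
  -- coordinate decomposition
  have hco : ∀ x : ℕ, x = B*(x/B) + x%B ∧ x%B < B :=
    fun x => ⟨(Nat.div_add_mod x B).symm, Nat.mod_lt x hB0⟩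
  -- regions
  set SQ : ℕ × ℕ → Finset (QL L) := fun ab =>
    univ.filter (fun p => (p.1:ℕ)/B = ab.1 ∧ (p.2:ℕ)/B = ab.2 ∧
      (p.1:ℕ)%B < ℓ ∧ (p.2:ℕ)%B < ℓ) with hSQdef
  set A : Finset (QL L) := univ.filter (fun p => (p.1:ℕ)%B < ℓ ∧ (p.2:ℕ)%B < ℓ) with hAdef
  set Pc : (ℕ × ℕ) × Bool → Finset (QL L) := fun i =>
    univ.filter (fun p => (p.1:ℕ)/B = i.1.1 ∧ (p.2:ℕ)/B = i.1.2 ∧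
      (if i.2 then ρ ≤ (p.1:ℕ)%B ∧ (p.1:ℕ)%B + ρ < ℓ ∧ ℓ ≤ (p.2:ℕ)%B
       else ρ ≤ (p.2:ℕ)%B ∧ (p.2:ℕ)%B + ρ < ℓ ∧ ℓ ≤ (p.1:ℕ)%B)) with hPcdef
  set I2 : Finset (ℕ × ℕ) := Finset.range nb ×ˢ Finset.range nb with hI2def
  set IHV : Finset ((ℕ × ℕ) × Bool) := I2 ×ˢ (Finset.univ : Finset Bool) with hIHVdef
  set segs : Finset (QL L) := IHV.biUnion Pc with hsegsdef
  set junk : Finset (QL L) := Aᶜ \ segs with hjunkdef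
  -- squares are correctable
  have hsqsize : 2*ρ*(ℓ+2*ρ) + 2*ρ*(ℓ+2*ρ) < d := by
    have e : 2*ρ*(ℓ+2*ρ) + 2*ρ*(ℓ+2*ρ) = 4*(ρ*ℓ) + 8*(ρ*ρ) := by ring
    omega
  have hsqcorr : ∀ ab : ℕ × ℕ, Corr G (SQ ab) := by
    intro ab v hv hsupp
    apply rect_corr G gensG ρ hρ hGspan hGloc d hd (B*ab.1) (B*ab.2) ℓ ℓ hsqsize v hv
    intro q hq
    have hq' := hsupp hq
    rw [hSQdef] at hq'
    simp only [Finset.mem_filter, Finset.mem_univ, true_and] at hq'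
    obtain ⟨ha, hb, hm1, hm2⟩ := hq'
    have h1 := hco (q.1 : ℕ)
    have h2 := hco (q.2 : ℕ)
    rw [ha] at h1
    rw [hb] at h2
    rw [mem_Rct]
    omega
  -- separation of squares
  have hsepSQ : ∀ i ∈ I2, ∀ j ∈ I2, i ≠ j → ∀ p ∈ SQ i, ∀ p' ∈ SQ j,
      ρ ≤ Nat.dist (p.1:ℕ) (p'.1:ℕ) ∨ ρ ≤ Nat.dist (p.2:ℕ) (p'.2:ℕ) := by
    intro i _ j _ hij p hp p' hp'
    rw [hSQdef] at hp hp'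
    simp only [Finset.mem_filter, Finset.mem_univ, true_and] at hp hp'
    obtain ⟨ha, hb, hm1, hm2⟩ := hp
    obtain ⟨ha', hb', hm1', hm2'⟩ := hp'
    have h1 := (hco (p.1:ℕ)).1
    have h2 := (hco (p.2:ℕ)).1
    have h1' := (hco (p'.1:ℕ)).1
    have h2' := (hco (p'.2:ℕ)).1
    rw [ha] at h1; rw [hb] at h2; rw [ha'] at h1'; rw [hb'] at h2'
    by_cases hA : i.1 = j.1
    · have hBne : i.2 ≠ j.2 := by
        intro hBeq; exact hij (Prod.ext hA hBeq)
      right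
      rw [h2, h2']
      exact sep1 hBdef hℓρ hblk hBne hm2 hm2'
    · left
      rw [h1, h1']
      exact sep1 hBdef hℓρ hblk hA hm1 hm1'
  -- the union of all squares is correctable
  have hAcorr : Corr G A := by
    intro v hv hsupp
    have hv' : v ∈ pcent (Submodule.span F2 gensS) := by rw [← hSspan]; exact hv
    have hcover : ∀ q, v q ≠ 0 → ∃ i ∈ I2, q ∈ SQ i := by
      intro q hq
      have hqA := hsupp (mem_psupp.mpr hq)
      rw [hAdef] at hqA
      simp only [Finset.mem_filter, Finset.mem_univ, true_and] at hqA
      refine ⟨((q.1:ℕ)/B, (q.2:ℕ)/B), ?_, ?_⟩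
      · rw [hI2def]
        rw [Finset.mem_product, Finset.mem_range, Finset.mem_range]
        constructor
        · have : (q.1:ℕ)/B ≤ L/B := Nat.div_le_div_right (le_of_lt q.1.isLt)
          omega
        · have : (q.2:ℕ)/B ≤ L/B := Nat.div_le_div_right (le_of_lt q.2.isLt)
          omega
      · simp only [hSQdef, Finset.mem_filter, Finset.mem_univ, true_and]
        omega
    obtain ⟨hproj, hsum⟩ := union_lemma gensS ρ hρ hSloc I2 SQ hsepSQ v hv' hcover
    rw [hsum]
    apply Submodule.sum_mem
    intro i hi
    have h1 : projL (SQ i) v ∈ pcent (pstab G) := by rw [hSspan]; exact hproj i hi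
    exact hsqcorr i (projL (SQ i) v) h1 (psupp_projL _ _)
  -- every bare logical operator can be pushed onto the grid
  have hclean : pcent G ≤ pstab G ⊔ PMod Aᶜ := bare_clean G A hAcorr
  -- separation of the grid segments
  have hsepPc : ∀ i ∈ IHV, ∀ j ∈ IHV, i ≠ j → ∀ p ∈ Pc i, ∀ p' ∈ Pc j,
      ρ ≤ Nat.dist (p.1:ℕ) (p'.1:ℕ) ∨ ρ ≤ Nat.dist (p.2:ℕ) (p'.2:ℕ) := by
    intro i _ j _ hij p hp p' hp'
    simp only [hPcdef, Finset.mem_filter, Finset.mem_univ, true_and] at hp hp'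
    obtain ⟨ha, hb, hcond⟩ := hp
    obtain ⟨ha', hb', hcond'⟩ := hp'
    have h1 := (hco (p.1:ℕ)).1
    have h2 := (hco (p.2:ℕ)).1
    have h1' := (hco (p'.1:ℕ)).1
    have h2' := (hco (p'.2:ℕ)).1
    have hm1 := (hco (p.1:ℕ)).2
    have hm2 := (hco (p.2:ℕ)).2
    have hm1' := (hco (p'.1:ℕ)).2
    have hm2' := (hco (p'.2:ℕ)).2
    rw [ha] at h1; rw [hb] at h2; rw [ha'] at h1'; rw [hb'] at h2'
    rcases hi2 : i.2 with _ | _ <;> rcases hj2 : j.2 with _ | _ <;>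
      rw [hi2] at hcond <;> rw [hj2] at hcond' <;>
      simp only [if_true, if_false, Bool.false_eq_true, ite_false, ite_true] at hcond hcond'
    · -- both vertical (false/false)
      obtain ⟨c1, c2, c3⟩ := hcond
      obtain ⟨c1', c2', c3'⟩ := hcond'
      by_cases hA : i.1.2 = j.1.2
      · have hBne : i.1.1 ≠ j.1.1 := by
          intro hBeq
          exact hij (Prod.ext (Prod.ext hBeq hA) (by rw [hi2, hj2]))
        left
        rw [h1, h1']
        exact sep2 hBdef hℓρ hblk hBne c3 hm1 c3' hm1'
      · right
        rw [h2, h2']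
        exact sep1 hBdef hℓρ hblk hA (by omega) (by omega)
    · -- p vertical, p' horizontal
      obtain ⟨c1, c2, c3⟩ := hcond
      obtain ⟨c1', c2', c3'⟩ := hcond'
      left
      rw [h1, h1', Nat.dist_comm]
      exact sep3 hBdef hℓρ hblk c1' c2' c3 hm1
    · -- p horizontal, p' vertical
      obtain ⟨c1, c2, c3⟩ := hcond
      obtain ⟨c1', c2', c3'⟩ := hcond'
      left
      rw [h1, h1']
      exact sep3 hBdef hℓρ hblk c1 c2 c3' hm1'
    · -- both horizontal (true/true)
      obtain ⟨c1, c2, c3⟩ := hcond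
      obtain ⟨c1', c2', c3'⟩ := hcond'
      by_cases hA : i.1.1 = j.1.1
      · have hBne : i.1.2 ≠ j.1.2 := by
          intro hBeq
          exact hij (Prod.ext (Prod.ext hA hBeq) (by rw [hi2, hj2]))
        right
        rw [h2, h2']
        exact sep2 hBdef hℓρ hblk hBne c3 hm2 c3' hm2'
      · left
        rw [h1, h1']
        exact sep1 hBdef hℓρ hblk hA (by omega) (by omega)
  -- each grid segment is small
  have hPcsmall : ∀ i : (ℕ × ℕ) × Bool, (Pc i).card < d := by
    intro i
    have hsub : Pc i ⊆ (if i.2 then Rct (B*i.1.1+ρ) (B*i.1.1+ℓ) (B*i.1.2+ℓ) (B*i.1.2+B)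
        else Rct (B*i.1.1+ℓ) (B*i.1.1+B) (B*i.1.2+ρ) (B*i.1.2+ℓ)) := by
      intro q hq
      simp only [hPcdef, Finset.mem_filter, Finset.mem_univ, true_and] at hq
      obtain ⟨ha, hb, hcond⟩ := hq
      have h1 := (hco (q.1:ℕ)).1
      have h2 := (hco (q.2:ℕ)).1
      have hm1 := (hco (q.1:ℕ)).2
      have hm2 := (hco (q.2:ℕ)).2
      rw [ha] at h1; rw [hb] at h2
      rcases hi2 : i.2 with _ | _ <;> rw [hi2] at hcond <;>
        simp only [if_true, if_false, Bool.false_eq_true, ite_false, ite_true] at hcond ⊢ <;>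
        rw [mem_Rct] <;> omega
    have hcard : (Pc i).card ≤ ρ * ℓ := by
      rcases hi2 : i.2 with _ | _ <;> rw [hi2] at hsub <;>
        simp only [if_true, if_false, Bool.false_eq_true, ite_false, ite_true] at hsub
      · have := Finset.card_le_card hsub
        have hcR := card_Rct (L := L) (B*i.1.1+ℓ) (B*i.1.1+B) (B*i.1.2+ρ) (B*i.1.2+ℓ)
        have e1 : (B*i.1.1+B) - (B*i.1.1+ℓ) = ρ := by omega
        have e2 : (B*i.1.2+ℓ) - (B*i.1.2+ρ) = ℓ - ρ := by omega
        rw [e1, e2] at hcR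
        have : ρ * (ℓ - ρ) ≤ ρ * ℓ := Nat.mul_le_mul_left ρ (by omega)
        omega
      · have := Finset.card_le_card hsub
        have hcR := card_Rct (L := L) (B*i.1.1+ρ) (B*i.1.1+ℓ) (B*i.1.2+ℓ) (B*i.1.2+B)
        have e1 : (B*i.1.1+ℓ) - (B*i.1.1+ρ) = ℓ - ρ := by omega
        have e2 : (B*i.1.2+B) - (B*i.1.2+ℓ) = ρ := by omega
        rw [e1, e2] at hcR
        have : (ℓ - ρ) * ρ ≤ ρ * ℓ := by
          have h' : (ℓ - ρ) * ρ ≤ ℓ * ρ := Nat.mul_le_mul_right ρ (by omega)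
          have e' : ℓ * ρ = ρ * ℓ := by ring
          omega
        omega
    have : ρ * ℓ < d := by omega
    omega
  -- the subspace of bare logical operators supported on the grid
  set X : Submodule F2 (PauliSpace (QL L)) := pcent G ⊓ PMod Aᶜ with hXdef
  have hsub2 : pcent G ≤ pstab G ⊔ X := by
    intro v hv
    rcases Submodule.mem_sup.mp (hclean hv) with ⟨s, hs, w, hw, hvw⟩
    have hwe : w = v - s := by rw [← hvw]; ring
    have hwX : w ∈ X := by
      refine ⟨?_, hw⟩
      rw [hwe]
      exact sub_mem hv (pstab_le_pcent G hs)
    exact Submodule.mem_sup.mpr ⟨s, hs, w, hwX, hvw⟩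
  -- the restriction-to-junk map
  set ψ : ↥X →ₗ[F2] ({q // q ∈ junk} → F2 × F2) :=
    { toFun := fun v q => (v : PauliSpace (QL L)) q.1
      map_add' := fun u v => rfl
      map_smul' := fun c v => rfl } with hψdef
  -- elements of the kernel are stabilizers
  have hker : ∀ v : ↥X, ψ v = 0 → (v : PauliSpace (QL L)) ∈ pstab G := by
    intro v hψv
    obtain ⟨hvc, hvm⟩ := v.2
    have hcover : ∀ q, (v : PauliSpace (QL L)) q ≠ 0 → ∃ i ∈ IHV, q ∈ Pc i := by
      intro q hq
      have hqΓ : q ∈ Aᶜ := mem_PMod_iff_psupp.mp hvm (mem_psupp.mpr hq)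
      have hqnj : q ∉ junk := by
        intro hqj
        have := congrFun hψv ⟨q, hqj⟩
        exact hq this
      rw [hjunkdef, Finset.mem_sdiff] at hqnj
      push_neg at hqnj
      have hqsegs : q ∈ segs := hqnj hqΓ
      rw [hsegsdef] at hqsegs
      exact Finset.mem_biUnion.mp hqsegs
    have hv' : (v : PauliSpace (QL L)) ∈ pcent (Submodule.span F2 gensG) := by
      rw [← hGspan]; exact hvc
    obtain ⟨hproj, hsum⟩ := union_lemma gensG ρ hρ hGloc IHV Pc hsepPc _ hv' hcover
    have hstab : ∀ i ∈ IHV, projL (Pc i) (v : PauliSpace (QL L)) ∈ pstab G := by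
      intro i hi
      have hpc : projL (Pc i) (v : PauliSpace (QL L)) ∈ pcent G := by
        rw [hGspan]; exact hproj i hi
      have hpcs : projL (Pc i) (v : PauliSpace (QL L)) ∈ pcent (pstab G) :=
        pcent_antitone (pstab_le_self G) hpc
      have hwt : pwt (projL (Pc i) (v : PauliSpace (QL L))) < d := by
        have := pwt_le_card (psupp_projL (Pc i) (v : PauliSpace (QL L)))
        have := hPcsmall i
        omega
      have hinG : projL (Pc i) (v : PauliSpace (QL L)) ∈ G := by
        by_contra hn
        have := hd _ hpcs hn
        omega
      exact ⟨hinG, hpc⟩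
    rw [hsum]
    exact Submodule.sum_mem _ hstab
  -- dimension chase
  have f1 : finrank F2 (pcent G) ≤ finrank F2 ↥(pstab G ⊔ X) := Submodule.finrank_mono hsub2
  have f2 : finrank F2 ↥(pstab G ⊔ X) + finrank F2 ↥(pstab G ⊓ X)
      = finrank F2 ↥(pstab G) + finrank F2 ↥X :=
    Submodule.finrank_sup_add_finrank_inf_eq _ _
  have f3 : finrank F2 ↥X = finrank F2 ↥(LinearMap.range ψ) + finrank F2 ↥(LinearMap.ker ψ) :=
    (LinearMap.finrank_range_add_finrank_ker ψ).symm
  have fcodom : finrank F2 ({q // q ∈ junk} → F2 × F2) = 2 * junk.card := by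
    rw [Module.finrank_pi_fintype]
    have h22 : finrank F2 (F2 × F2) = 2 := by
      rw [Module.finrank_prod, Module.finrank_self]
    simp only [h22, Finset.sum_const, smul_eq_mul]
    rw [Finset.card_univ, Fintype.card_coe]
    ring
  have f4 : finrank F2 ↥(LinearMap.range ψ) ≤ 2 * junk.card := by
    have := Submodule.finrank_le (LinearMap.range ψ)
    omega
  have f5 : finrank F2 ↥(LinearMap.ker ψ) ≤ finrank F2 ↥(pstab G ⊓ X) := by
    have hinj : Function.Injective
        ((LinearMap.codRestrict (pstab G ⊓ X)
          ((X.subtype).comp (LinearMap.ker ψ).subtype)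
          (fun c => ⟨by exact hker c.1 (LinearMap.mem_ker.mp c.2), by exact c.1.2⟩))) := by
      intro a b hab
      apply Subtype.ext; apply Subtype.ext
      exact congrArg (fun x : ↥(pstab G ⊓ X) => (x : PauliSpace (QL L))) hab
    exact LinearMap.finrank_le_finrank_of_injective hinj
  -- count the junk
  have hjcard : junk.card ≤ 6 * (ρ*ρ) * (nb * nb) := by
    classical
    set T : Finset (ℕ × ℕ) := (Finset.range B ×ˢ Finset.range B).filter
      (fun mn => (ℓ ≤ mn.1 ∧ (mn.2 < ρ ∨ ℓ ≤ mn.2 + ρ)) ∨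
                 (ℓ ≤ mn.2 ∧ (mn.1 < ρ ∨ ℓ ≤ mn.1 + ρ))) with hTdef
    have hTcard : T.card ≤ 6 * (ρ*ρ) := by
      have hsubT : T ⊆ (Finset.Ico ℓ B ×ˢ (Finset.Ico 0 ρ ∪ Finset.Ico (ℓ-ρ) B))
          ∪ ((Finset.Ico 0 ρ ∪ Finset.Ico (ℓ-ρ) B) ×ˢ Finset.Ico ℓ B) := by
        intro mn hmn
        rw [hTdef, Finset.mem_filter] at hmn
        obtain ⟨hmem, hcond⟩ := hmn
        rw [Finset.mem_product, Finset.mem_range, Finset.mem_range] at hmem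
        rw [Finset.mem_union, Finset.mem_product, Finset.mem_product]
        rcases hcond with ⟨hc1, hc2⟩ | ⟨hc1, hc2⟩
        · left
          refine ⟨by rw [Finset.mem_Ico]; omega, ?_⟩
          rw [Finset.mem_union, Finset.mem_Ico, Finset.mem_Ico]
          omega
        · right
          refine ⟨?_, by rw [Finset.mem_Ico]; omega⟩
          rw [Finset.mem_union, Finset.mem_Ico, Finset.mem_Ico]
          omega
      have h1 := Finset.card_le_card hsubT
      have h2 := Finset.card_union_le (Finset.Ico ℓ B ×ˢ (Finset.Ico 0 ρ ∪ Finset.Ico (ℓ-ρ) B))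
        ((Finset.Ico 0 ρ ∪ Finset.Ico (ℓ-ρ) B) ×ˢ Finset.Ico ℓ B)
      have h3 := Finset.card_union_le (Finset.Ico 0 ρ) (Finset.Ico (ℓ-ρ) B)
      have hIc1 : (Finset.Ico ℓ B).card = ρ := by rw [Nat.card_Ico]; omega
      have hIc2 : (Finset.Ico 0 ρ).card = ρ := by rw [Nat.card_Ico]; omega
      have hIc3 : (Finset.Ico (ℓ-ρ) B).card = 2*ρ := by rw [Nat.card_Ico]; omega
      have hp1 : (Finset.Ico ℓ B ×ˢ (Finset.Ico 0 ρ ∪ Finset.Ico (ℓ-ρ) B)).card ≤ ρ * (3*ρ) := by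
        rw [Finset.card_product, hIc1]
        apply Nat.mul_le_mul_left
        omega
      have hp2 : ((Finset.Ico 0 ρ ∪ Finset.Ico (ℓ-ρ) B) ×ˢ Finset.Ico ℓ B).card ≤ (3*ρ) * ρ := by
        rw [Finset.card_product, hIc1]
        apply Nat.mul_le_mul_right
        omega
      have e : ρ * (3*ρ) + (3*ρ) * ρ = 6 * (ρ*ρ) := by ring
      omega
    have hinj : junk.card ≤ ((Finset.range nb ×ˢ Finset.range nb) ×ˢ T).card := by
      apply Finset.card_le_card_of_injOn
        (fun q => (((q.1:ℕ)/B, (q.2:ℕ)/B), ((q.1:ℕ)%B, (q.2:ℕ)%B)))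
      · intro q hq
        rw [Finset.mem_coe, hjunkdef, Finset.mem_sdiff] at hq
        obtain ⟨hqΓ, hqns⟩ := hq
        rw [Finset.mem_compl, hAdef] at hqΓ
        simp only [Finset.mem_filter, Finset.mem_univ, true_and] at hqΓ
        push_neg at hqΓ
        have hrange1 : (q.1:ℕ)/B < nb := by
          have : (q.1:ℕ)/B ≤ L/B := Nat.div_le_div_right (le_of_lt q.1.isLt)
          omega
        have hrange2 : (q.2:ℕ)/B < nb := by
          have : (q.2:ℕ)/B ≤ L/B := Nat.div_le_div_right (le_of_lt q.2.isLt)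
          omega
        have hnotH : q ∉ Pc (((q.1:ℕ)/B, (q.2:ℕ)/B), true) := by
          intro hmem
          apply hqns
          rw [hsegsdef]
          apply Finset.mem_biUnion.mpr
          refine ⟨(((q.1:ℕ)/B, (q.2:ℕ)/B), true), ?_, hmem⟩
          rw [hIHVdef, Finset.mem_product, hI2def, Finset.mem_product]
          simp only [Finset.mem_range, Finset.mem_univ, and_true]
          exact ⟨hrange1, hrange2⟩
        have hnotV : q ∉ Pc (((q.1:ℕ)/B, (q.2:ℕ)/B), false) := by
          intro hmem
          apply hqns
          rw [hsegsdef]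
          apply Finset.mem_biUnion.mpr
          refine ⟨(((q.1:ℕ)/B, (q.2:ℕ)/B), false), ?_, hmem⟩
          rw [hIHVdef, Finset.mem_product, hI2def, Finset.mem_product]
          simp only [Finset.mem_range, Finset.mem_univ, and_true]
          exact ⟨hrange1, hrange2⟩
        have hH' : ¬(ρ ≤ (q.1:ℕ)%B ∧ (q.1:ℕ)%B + ρ < ℓ ∧ ℓ ≤ (q.2:ℕ)%B) := by
          intro hc
          apply hnotH
          simp only [hPcdef, Finset.mem_filter, Finset.mem_univ, true_and, reduceIte]
          exact hc
        have hV' : ¬(ρ ≤ (q.2:ℕ)%B ∧ (q.2:ℕ)%B + ρ < ℓ ∧ ℓ ≤ (q.1:ℕ)%B) := by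
          intro hc
          apply hnotV
          simp only [hPcdef, Finset.mem_filter, Finset.mem_univ, true_and, reduceIte]
          exact hc
        rw [Finset.mem_coe, Finset.mem_product, Finset.mem_product, Finset.mem_range, Finset.mem_range]
        refine ⟨⟨hrange1, hrange2⟩, ?_⟩
        rw [hTdef, Finset.mem_filter, Finset.mem_product, Finset.mem_range, Finset.mem_range]
        have hm1 := (hco (q.1:ℕ)).2
        have hm2 := (hco (q.2:ℕ)).2
        refine ⟨⟨hm1, hm2⟩, ?_⟩
        show (ℓ ≤ (q.1:ℕ)%B ∧ ((q.2:ℕ)%B < ρ ∨ ℓ ≤ (q.2:ℕ)%B + ρ)) ∨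
          (ℓ ≤ (q.2:ℕ)%B ∧ ((q.1:ℕ)%B < ρ ∨ ℓ ≤ (q.1:ℕ)%B + ρ))
        omega
      · intro p hp p' hp' heq
        simp only [Prod.mk.injEq] at heq
        obtain ⟨⟨e1, e2⟩, e3, e4⟩ := heq
        have hx := (hco (p.1:ℕ)).1
        have hx' := (hco (p'.1:ℕ)).1
        have hy := (hco (p.2:ℕ)).1
        have hy' := (hco (p'.2:ℕ)).1
        have hfx : (p.1:ℕ) = (p'.1:ℕ) := by rw [hx, hx', e1, e3]
        have hfy : (p.2:ℕ) = (p'.2:ℕ) := by rw [hy, hy', e2, e4]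
        exact Prod.ext (Fin.ext hfx) (Fin.ext hfy)
    have hprod : ((Finset.range nb ×ˢ Finset.range nb) ×ˢ T).card = nb * nb * T.card := by
      rw [Finset.card_product, Finset.card_product, Finset.card_range]
    calc junk.card ≤ nb * nb * T.card := by omega
      _ ≤ nb * nb * (6 * (ρ*ρ)) := Nat.mul_le_mul_left _ hTcard
      _ = 6 * (ρ*ρ) * (nb * nb) := by ring
  -- conclude
  have goal_eq : 6*ρ^2*nb^2 = 6*(ρ*ρ)*(nb*nb) := by ring
  have : 2*k ≤ 2*junk.card := by omega
  omega


end KD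
/-- Upper bound `kd² = O(n)` for 2D subsystem codes in which both the gauge group and
the stabilizer group have spatially local generators, where `n = L²`. -/
theorem kd_sq_upper_bound (r rs : ℕ) (hr : 0 < r) (hrs : 0 < rs) :
    ∃ C : ℝ, 0 < C ∧ ∀ L : ℕ, ∀ G : Submodule F2 (PauliSpace (Fin L × Fin L)),
      HasLocalGens r G →
      HasLocalGens rs (pstab G) →
      ∀ k : ℕ, 1 ≤ k →
      Module.finrank F2 ↥(pcent G) = Module.finrank F2 ↥(pstab G) + 2 * k →
      ∀ d : ℕ, d = sInf (distSet G) →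
      (k : ℝ) * (d : ℝ) ^ 2 ≤ C * (L : ℝ) ^ 2 := by
  classical
  set ρ : ℕ := max r rs with hρdef
  have hρ : 1 ≤ ρ := le_trans hr (le_max_left r rs)
  refine ⟨384*(ρ:ℝ)^4*(2+(ρ:ℝ))^2 + 4096*(ρ:ℝ)^4 + 1, by positivity, ?_⟩
  intro L G hG hS k hk1 hfr d hdd
  obtain ⟨gensG, hGspan, hGloc0⟩ := hG
  obtain ⟨gensS, hSspan, hSloc0⟩ := hS
  have hGloc : ∀ g ∈ gensG, InBox ρ (psupp g) :=
    fun g hg => KD.inBox_mono (le_max_left r rs) (hGloc0 g hg)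
  have hSloc : ∀ g ∈ gensS, InBox ρ (psupp g) :=
    fun g hg => KD.inBox_mono (le_max_right r rs) (hSloc0 g hg)
  have hdprop : ∀ v ∈ pcent (pstab G), v ∉ G → d ≤ pwt v := by
    intro v hv hvg
    rw [hdd]
    exact Nat.sInf_le ⟨v, hv, hvg, rfl⟩
  have hdim : Module.finrank F2 (PauliSpace (Fin L × Fin L)) = 2*(L*L) := by
    rw [Module.finrank_pi_fintype]
    have h22 : Module.finrank F2 (F2 × F2) = 2 := by
      rw [Module.finrank_prod, Module.finrank_self]
    simp only [h22, Finset.sum_const, smul_eq_mul, Finset.card_univ]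
    rw [Fintype.card_prod, Fintype.card_fin]
    ring
  have hkL : k ≤ L*L := by
    have h1 : Module.finrank F2 ↥(pcent G) ≤ Module.finrank F2 (PauliSpace (Fin L × Fin L)) :=
      Submodule.finrank_le _
    omega
  have hL1 : 1 ≤ L := by
    rcases Nat.eq_zero_or_pos L with h | h
    · subst h
      simp only [Nat.mul_zero] at hkL
      omega
    · exact h
  by_cases hsmall : d < 64*ρ^2
  · -- small distance: use k ≤ L²
    have hnat : k*d^2 ≤ (4096*ρ^4)*(L*L) := by
      have b1 : d^2 ≤ (64*ρ^2)^2 := Nat.pow_le_pow_left (by omega) 2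
      have b2 : k*d^2 ≤ (L*L)*(64*ρ^2)^2 := Nat.mul_le_mul hkL b1
      have b3 : (L*L)*(64*ρ^2)^2 = (4096*ρ^4)*(L*L) := by ring
      omega
    calc (k : ℝ) * (d : ℝ)^2 = ((k*d^2 : ℕ) : ℝ) := by push_cast; ring
      _ ≤ (((4096*ρ^4)*(L*L) : ℕ) : ℝ) := Nat.cast_le.mpr hnat
      _ ≤ (384*(ρ:ℝ)^4*(2+(ρ:ℝ))^2 + 4096*(ρ:ℝ)^4 + 1) * (L:ℝ)^2 := by
          push_cast
          have e : (L:ℝ)*(L:ℝ) = (L:ℝ)^2 := by ring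
          rw [e]
          have hA : (0:ℝ) ≤ 384*(ρ:ℝ)^4*(2+(ρ:ℝ))^2 := by positivity
          have hL2 : (0:ℝ) ≤ (L:ℝ)^2 := by positivity
          nlinarith [hA, hL2]
  · push_neg at hsmall
    by_cases hbig : 8*ρ*(L+1) ≤ d
    · have h0 := KD.big_d_case G ρ gensG d k hρ hGspan hGloc hdprop hfr hsmall hbig
      omega
    · push_neg at hbig
      have hcount := KD.main_count G ρ gensG gensS d k hρ hGspan hGloc hSspan hSloc
        hdprop hfr hsmall
      set ℓ : ℕ := d/(8*ρ) with hℓdef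
      set B : ℕ := ℓ + ρ with hBdef
      set nb : ℕ := L/B + 1 with hnbdef
      have h8ρ : 0 < 8*ρ := by omega
      have hdlt : d < (ℓ+1)*(8*ρ) := by
        apply (Nat.div_lt_iff_lt_mul h8ρ).mp
        omega
      have hℓL : ℓ ≤ L := by
        have : d/(8*ρ) < L+1 := (Nat.div_lt_iff_lt_mul h8ρ).mpr (by
          have e : (L+1)*(8*ρ) = 8*ρ*(L+1) := by ring
          omega)
        omega
      have a1 : d ≤ 8*ρ*B := by
        have e : (ℓ+1)*(8*ρ) = 8*(ρ*ℓ) + 8*ρ := by ring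
        have e2 : 8*ρ*B = 8*(ρ*ℓ) + 8*(ρ*ρ) := by rw [hBdef]; ring
        have hρρ : ρ ≤ ρ*ρ := Nat.le_mul_of_pos_left ρ (by omega)
        omega
      have a2 : nb*d ≤ nb*(8*ρ*B) := Nat.mul_le_mul_left nb a1
      have a5 : (L/B)*B ≤ L := Nat.div_mul_le_self L B
      have a6 : nb*B ≤ L + B := by
        have e : nb*B = (L/B)*B + B := by rw [hnbdef]; ring
        omega
      have a7 : B ≤ (2+ρ)*L - L := by
        have hρL : ρ ≤ ρ*L := Nat.le_mul_of_pos_right ρ hL1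
        have e : (2+ρ)*L = L + (L + ρ*L) := by ring
        omega
      have a8 : nb*B ≤ (2+ρ)*L := by
        have e : (2+ρ)*L = L + ((2+ρ)*L - L) := by
          have : L ≤ (2+ρ)*L := Nat.le_mul_of_pos_left L (by omega)
          omega
        omega
      have a9 : nb*d ≤ 8*ρ*((2+ρ)*L) := by
        have h1 : nb*(8*ρ*B) = 8*ρ*(nb*B) := by ring
        have h2 : 8*ρ*(nb*B) ≤ 8*ρ*((2+ρ)*L) := Nat.mul_le_mul_left (8*ρ) a8
        omega
      have hnat : k*d^2 ≤ (384*ρ^4*(2+ρ)^2)*(L*L) := by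
        have b1 : k ≤ 6*ρ^2*nb^2 := hcount
        have b2 : k*d^2 ≤ (6*ρ^2*nb^2)*d^2 := Nat.mul_le_mul_right _ b1
        have b3 : (6*ρ^2*nb^2)*d^2 = 6*ρ^2*(nb*d)^2 := by ring
        have b4 : (nb*d)^2 ≤ (8*ρ*((2+ρ)*L))^2 := Nat.pow_le_pow_left a9 2
        have b5 : 6*ρ^2*(nb*d)^2 ≤ 6*ρ^2*(8*ρ*((2+ρ)*L))^2 :=
          Nat.mul_le_mul_left _ b4
        have b6 : 6*ρ^2*(8*ρ*((2+ρ)*L))^2 = (384*ρ^4*(2+ρ)^2)*(L*L) := by ring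
        omega
      calc (k : ℝ) * (d : ℝ)^2 = ((k*d^2 : ℕ) : ℝ) := by push_cast; ring
        _ ≤ (((384*ρ^4*(2+ρ)^2)*(L*L) : ℕ) : ℝ) := Nat.cast_le.mpr hnat
        _ ≤ (384*(ρ:ℝ)^4*(2+(ρ:ℝ))^2 + 4096*(ρ:ℝ)^4 + 1) * (L:ℝ)^2 := by
            push_cast
            have e : (L:ℝ)*(L:ℝ) = (L:ℝ)^2 := by ring
            rw [e]
            have hB : (0:ℝ) ≤ 4096*(ρ:ℝ)^4 := by positivity
            have hL2 : (0:ℝ) ≤ (L:ℝ)^2 := by positivity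
            nlinarith [hB, hL2]
end
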